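/- arXiv:1110.6864 — 5 statements merged into one kernel-verified Lean document; each statement's English description precedes it below -/
import Mathlib

section
/- For all integers n ≥ 2 and q ≥ 1, the number of line segments whose endpoints are points of the n×n grid {0,…,n−1}² and which pass through exactly q−1 interior grid points (i.e. (q+1)-gridsegments) equals (1/2)·f_q(n), where f_q(n) = Σ_{−n<i,j<n, gcd(i,j)=q} (n−|i|)(n−|j|). -/
open Finset Real Filter

/-- The grid `G(n) = {0,…,n−1}²` viewed as a set of points in `ℝ²`. -/
def gridPts (n : ℕ) : Set (ℝ × ℝ) :=
  {p | ∃ a b : ℤ, 0 ≤ a ∧ a < n ∧ 0 ≤ b ∧ b < n ∧ p = ((a : ℝ), (b : ℝ))}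

/-- `fq q n = Σ_{−n<i,j<n, gcd(i,j)=q} (n−|i|)(n−|j|)`. -/
noncomputable def fq (q n : ℕ) : ℤ :=
  ∑ i ∈ Finset.Ioo (-(n : ℤ)) n, ∑ j ∈ Finset.Ioo (-(n : ℤ)) n,
    if Int.gcd i j = q then ((n : ℤ) - |i|) * ((n : ℤ) - |j|) else 0

/-- The number of unordered pairs of distinct gridpoints whose closed segment
contains exactly `k` gridpoints (i.e. `k`-gridsegments, `k ≥ 2`). -/
noncomputable def segCount (n k : ℕ) : ℕ :=
  Set.ncard {s : Sym2 (ℝ × ℝ) | ∃ P Q : ℝ × ℝ, s = Sym2.mk P Q ∧ P ≠ Q ∧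
    P ∈ gridPts n ∧ Q ∈ gridPts n ∧ (segment ℝ P Q ∩ gridPts n).ncard = k}

/-- A subset of `ℝ²` is a line if it is the zero set of a nontrivial affine form. -/
def IsLine (L : Set (ℝ × ℝ)) : Prop :=
  ∃ a b c : ℝ, (a, b) ≠ (0, 0) ∧ L = {p | a * p.1 + b * p.2 + c = 0}

/-- The number of lines containing at least `q` points of the grid `G(n)`. -/
noncomputable def lineCountGe (n q : ℕ) : ℕ :=
  Set.ncard {L : Set (ℝ × ℝ) | IsLine L ∧ q ≤ (L ∩ gridPts n).ncard}

/-- The number of lines containing exactly `q` points of the grid `G(n)`. -/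
noncomputable def lineCountEq (n q : ℕ) : ℕ :=
  Set.ncard {L : Set (ℝ × ℝ) | IsLine L ∧ (L ∩ gridPts n).ncard = q}

namespace SegAux


def e (p : ℤ × ℤ) : ℝ × ℝ := ((p.1 : ℝ), (p.2 : ℝ))

lemma e_inj : Function.Injective e := by
  intro p q h
  simp only [e, Prod.mk.injEq, Int.cast_inj] at h
  exact Prod.ext h.1 h.2

noncomputable def box (n : ℕ) : Finset (ℤ × ℤ) := Finset.Ico (0:ℤ) n ×ˢ Finset.Ico (0:ℤ) n

lemma mem_box {n : ℕ} {p : ℤ × ℤ} :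
    p ∈ box n ↔ 0 ≤ p.1 ∧ p.1 < n ∧ 0 ≤ p.2 ∧ p.2 < n := by
  simp [box, Finset.mem_Ico, and_assoc]

lemma mem_grid {n : ℕ} {p : ℤ × ℤ} : e p ∈ gridPts n ↔ p ∈ box n := by
  constructor
  · rintro ⟨a, b, ha0, han, hb0, hbn, hp⟩
    simp only [e, Prod.mk.injEq, Int.cast_inj] at hp
    exact mem_box.2 ⟨hp.1 ▸ ha0, hp.1 ▸ han, hp.2 ▸ hb0, hp.2 ▸ hbn⟩
  · intro h
    obtain ⟨h1, h2, h3, h4⟩ := mem_box.1 h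
    exact ⟨p.1, p.2, h1, h2, h3, h4, rfl⟩

lemma grid_eq {n : ℕ} {x : ℝ × ℝ} (h : x ∈ gridPts n) : ∃ p ∈ box n, x = e p := by
  obtain ⟨a, b, h1, h2, h3, h4, h5⟩ := h
  exact ⟨(a, b), mem_box.2 ⟨h1, h2, h3, h4⟩, h5⟩

lemma coord_between {p q v k gg N : ℤ} (hq : q = p + gg * v) (hk0 : 0 ≤ k) (hkg : k ≤ gg)
    (hp0 : 0 ≤ p) (hpn : p < N) (hq0 : 0 ≤ q) (hqn : q < N) :
    0 ≤ p + k * v ∧ p + k * v < N := by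
  rcases le_or_gt 0 v with hv | hv
  · have h1 : 0 ≤ k * v := mul_nonneg hk0 hv
    have h2 : 0 ≤ (gg - k) * v := mul_nonneg (by omega) hv
    constructor <;> nlinarith
  · have h1 : 0 ≤ k * (-v) := mul_nonneg hk0 (by omega)
    have h2 : 0 ≤ (gg - k) * (-v) := mul_nonneg (by omega) (by omega)
    constructor <;> nlinarith

lemma prod_comp (t : ℝ) (P Q : ℤ × ℤ) :
    e P + t • (e Q - e P) = ((P.1:ℝ) + t * ((Q.1:ℝ) - P.1), (P.2:ℝ) + t * ((Q.2:ℝ) - P.2)) := by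
  simp [e, Prod.ext_iff]

lemma seg_inter {n : ℕ} {P Q : ℤ × ℤ} (hP : P ∈ box n) (hQ : Q ∈ box n) (hne : P ≠ Q) :
    (segment ℝ (e P) (e Q) ∩ gridPts n).ncard = Int.gcd (Q.1 - P.1) (Q.2 - P.2) + 1 := by
  obtain ⟨hP1, hP2, hP3, hP4⟩ := mem_box.1 hP
  obtain ⟨hQ1, hQ2, hQ3, hQ4⟩ := mem_box.1 hQ
  set d1 := Q.1 - P.1 with hd1def
  set d2 := Q.2 - P.2 with hd2def
  have hd : ¬(d1 = 0 ∧ d2 = 0) := by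
    rintro ⟨h1, h2⟩
    exact hne (Prod.ext (by omega) (by omega))
  set g : ℕ := Int.gcd d1 d2 with hgdef
  have hg : 0 < g := by
    rcases Nat.eq_zero_or_pos g with h | h
    · exact absurd (Int.gcd_eq_zero_iff.1 h) hd
    · exact h
  have hgR : (0:ℝ) < g := by exact_mod_cast hg
  set v1 : ℤ := d1 / g with hv1def
  set v2 : ℤ := d2 / g with hv2def
  have hdv1 : (g:ℤ) * v1 = d1 := Int.mul_ediv_cancel' (Int.gcd_dvd_left _ _)
  have hdv2 : (g:ℤ) * v2 = d2 := Int.mul_ediv_cancel' (Int.gcd_dvd_right _ _)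
  have hcop : Int.gcd v1 v2 = 1 := Int.gcd_div_gcd_div_gcd hg
  have hvne : ¬(v1 = 0 ∧ v2 = 0) := by
    rintro ⟨h1, h2⟩
    exact hd ⟨by rw [← hdv1, h1, mul_zero], by rw [← hdv2, h2, mul_zero]⟩
  obtain ⟨u, w, hbez⟩ := Int.isCoprime_iff_gcd_eq_one.2 hcop
  set F : ℤ → ℝ × ℝ := fun k => e (P.1 + k * v1, P.2 + k * v2) with hF
  have hQ1' : Q.1 = P.1 + (g:ℤ) * v1 := by rw [hd1def] at hdv1; linarith [hdv1]
  have hQ2' : Q.2 = P.2 + (g:ℤ) * v2 := by rw [hd2def] at hdv2; linarith [hdv2]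
  have hset : segment ℝ (e P) (e Q) ∩ gridPts n = F '' Set.Icc (0:ℤ) g := by
    ext x
    simp only [Set.mem_inter_iff, Set.mem_image, Set.mem_Icc]
    constructor
    · rintro ⟨hseg, hgrid⟩
      rw [segment_eq_image' ℝ (e P) (e Q)] at hseg
      obtain ⟨t, ⟨ht0, ht1⟩, hx⟩ := hseg
      obtain ⟨a, b, ha0, han, hb0, hbn, hab⟩ := hgrid
      simp only [prod_comp] at hx
      rw [hab] at hx
      obtain ⟨h1, h2⟩ := Prod.mk.injEq .. ▸ hx
      have hQ1R : (Q.1:ℝ) = (P.1:ℝ) + (g:ℝ) * (v1:ℝ) := by exact_mod_cast hQ1'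
      have hQ2R : (Q.2:ℝ) = (P.2:ℝ) + (g:ℝ) * (v2:ℝ) := by exact_mod_cast hQ2'
      have hr1 : (Q.1:ℝ) - (P.1:ℝ) = (g:ℝ) * (v1:ℝ) := by linarith
      have hr2 : (Q.2:ℝ) - (P.2:ℝ) = (g:ℝ) * (v2:ℝ) := by linarith
      rw [hr1] at h1
      rw [hr2] at h2
      have hα : t * ((g:ℝ) * (v1:ℝ)) = (a:ℝ) - (P.1:ℝ) := by linarith
      have hβ : t * ((g:ℝ) * (v2:ℝ)) = (b:ℝ) - (P.2:ℝ) := by linarith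
      set m : ℤ := u * (a - P.1) + w * (b - P.2) with hmdef
      have hbezR : (u:ℝ) * (v1:ℝ) + (w:ℝ) * (v2:ℝ) = 1 := by exact_mod_cast hbez
      have hmR : (m:ℝ) = (u:ℝ) * ((a:ℝ) - (P.1:ℝ)) + (w:ℝ) * ((b:ℝ) - (P.2:ℝ)) := by
        rw [hmdef]; push_cast; ring
      have hm : (m:ℝ) = t * (g:ℝ) := by
        rw [hmR]
        linear_combination (-(u:ℝ)) * hα + (-(w:ℝ)) * hβ + t * (g:ℝ) * hbezR
      have hm0 : 0 ≤ m := by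
        have : (0:ℝ) ≤ (m:ℝ) := by rw [hm]; positivity
        exact_mod_cast this
      have hmg : m ≤ (g:ℤ) := by
        have : (m:ℝ) ≤ (g:ℝ) := by rw [hm]; nlinarith
        exact_mod_cast this
      refine ⟨m, ⟨hm0, hmg⟩, ?_⟩
      have ha' : (a:ℝ) = (P.1:ℝ) + (m:ℝ) * (v1:ℝ) := by
        linear_combination (-1:ℝ) * hα - (v1:ℝ) * hm
      have hb' : (b:ℝ) = (P.2:ℝ) + (m:ℝ) * (v2:ℝ) := by
        linear_combination (-1:ℝ) * hβ - (v2:ℝ) * hm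
      have haZ : a = P.1 + m * v1 := by exact_mod_cast ha'
      have hbZ : b = P.2 + m * v2 := by exact_mod_cast hb'
      rw [hab, hF]
      simp only [e]
      rw [haZ, hbZ]
    · rintro ⟨k, ⟨hk0, hkg⟩, hFk⟩
      have hkgZ : k ≤ (g:ℤ) := hkg
      constructor
      · rw [segment_eq_image' ℝ (e P) (e Q)]
        refine ⟨(k:ℝ)/(g:ℝ), ⟨by positivity, ?_⟩, ?_⟩
        · rw [div_le_one hgR]; exact_mod_cast hkgZ
        · simp only [prod_comp]
          rw [← hFk, hF]
          simp only [e, Prod.mk.injEq]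
          constructor
          · push_cast [hQ1']
            field_simp
            ring
          · push_cast [hQ2']
            field_simp
            ring
      · rw [← hFk, hF]
        apply mem_grid.2
        apply mem_box.2
        have c1 := coord_between hQ1' hk0 hkgZ hP1 hP2 hQ1 hQ2
        have c2 := coord_between hQ2' hk0 hkgZ hP3 hP4 hQ3 hQ4
        exact ⟨c1.1, c1.2, c2.1, c2.2⟩
  rw [hset]
  have hinj : Set.InjOn F (Set.Icc (0:ℤ) g) := by
    intro k _ k' _ h
    have h' := e_inj h
    simp only [Prod.mk.injEq] at h'
    rcases not_and_or.1 hvne with hv | hv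
    · have := h'.1
      have : k * v1 = k' * v1 := by omega
      exact mul_right_cancel₀ hv this
    · have := h'.2
      have : k * v2 = k' * v2 := by omega
      exact mul_right_cancel₀ hv this
  rw [Set.ncard_image_of_injOn hinj, ← Finset.coe_Icc, Set.ncard_coe_finset, Int.card_Icc]
  omega




noncomputable def T (n q : ℕ) : Finset ((ℤ × ℤ) × (ℤ × ℤ)) :=
  (box n ×ˢ box n).filter fun pq =>
    pq.1 ≠ pq.2 ∧ Int.gcd (pq.2.1 - pq.1.1) (pq.2.2 - pq.1.2) = q

lemma card1 (n : ℕ) (i : ℤ) (h1 : -(n:ℤ) < i) (h2 : i < n) :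
    (((Finset.Ico (0:ℤ) n).filter (fun a => a + i ∈ Finset.Ico (0:ℤ) n)).card : ℤ)
      = (n:ℤ) - |i| := by
  have hs : (Finset.Ico (0:ℤ) n).filter (fun a => a + i ∈ Finset.Ico (0:ℤ) n)
      = Finset.Ico (max 0 (-i)) (min (n:ℤ) ((n:ℤ) - i)) := by
    ext a
    simp only [Finset.mem_filter, Finset.mem_Ico, le_max_iff, max_le_iff, lt_min_iff, le_min_iff]
    omega
  rw [hs, Int.card_Ico]
  rcases le_or_gt 0 i with h | h
  · rw [abs_of_nonneg h]; omega
  · rw [abs_of_neg h]; omega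

lemma Tcard (n q : ℕ) (hq : 1 ≤ q) : ((T n q).card : ℤ) = fq q n := by
  classical
  have hmap : ∀ pq ∈ T n q,
      ((pq.2.1 - pq.1.1, pq.2.2 - pq.1.2) : ℤ × ℤ)
        ∈ Finset.Ioo (-(n:ℤ)) (n:ℤ) ×ˢ Finset.Ioo (-(n:ℤ)) (n:ℤ) := by
    intro pq h
    simp only [T, Finset.mem_filter, Finset.mem_product] at h
    have h1 := mem_box.1 h.1.1
    have h2 := mem_box.1 h.1.2
    simp only [Finset.mem_product, Finset.mem_Ioo]
    omega
  rw [Finset.card_eq_sum_card_fiberwise hmap, fq, ← Finset.sum_product']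
  push_cast
  refine Finset.sum_congr rfl ?_
  intro d hd
  simp only [Finset.mem_product, Finset.mem_Ioo] at hd
  by_cases hgcd : Int.gcd d.1 d.2 = q
  · rw [if_pos hgcd]
    have hd0 : ¬(d.1 = 0 ∧ d.2 = 0) := by
      rintro ⟨e1, e2⟩
      rw [e1, e2] at hgcd
      simp [Int.gcd] at hgcd
      omega
    have himg : (T n q).filter (fun pq => (pq.2.1 - pq.1.1, pq.2.2 - pq.1.2) = d)
        = Finset.image (fun P : ℤ × ℤ => (P, (P.1 + d.1, P.2 + d.2)))
            ((box n).filter (fun P => (P.1 + d.1, P.2 + d.2) ∈ box n)) := by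
      ext pq
      simp only [T, Finset.mem_filter, Finset.mem_product, Finset.mem_image]
      constructor
      · rintro ⟨⟨⟨hb1, hb2⟩, _, _⟩, hdiff⟩
        have hd1 : pq.2.1 - pq.1.1 = d.1 := by rw [← hdiff]
        have hd2 : pq.2.2 - pq.1.2 = d.2 := by rw [← hdiff]
        have h2 : (pq.1.1 + d.1, pq.1.2 + d.2) = pq.2 := by
          have he : pq.2 = (pq.2.1, pq.2.2) := rfl
          rw [he]
          exact Prod.ext (by omega) (by omega)
        refine ⟨pq.1, ⟨hb1, by rw [h2]; exact hb2⟩, ?_⟩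
        rw [h2]
      · rintro ⟨P, ⟨hb1, hb2⟩, hPeq⟩
        subst hPeq
        refine ⟨⟨⟨hb1, hb2⟩, ?_, ?_⟩, ?_⟩
        · intro hPP
          rw [Prod.ext_iff] at hPP
          simp only at hPP
          exact hd0 ⟨by omega, by omega⟩
        · simpa using hgcd
        · simp
    rw [himg, Finset.card_image_of_injective _ (fun a b h => congrArg Prod.fst h)]
    have hsplit : (box n).filter (fun P : ℤ × ℤ => (P.1 + d.1, P.2 + d.2) ∈ box n)
        = ((Finset.Ico (0:ℤ) n).filter fun a => a + d.1 ∈ Finset.Ico (0:ℤ) n)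
          ×ˢ ((Finset.Ico (0:ℤ) n).filter fun b => b + d.2 ∈ Finset.Ico (0:ℤ) n) := by
      rw [box, ← Finset.filter_product]
      refine Finset.filter_congr ?_
      intro P _
      simp [Finset.mem_product]
    rw [hsplit, Finset.card_product]
    push_cast
    rw [card1 n d.1 (by omega) (by omega), card1 n d.2 (by omega) (by omega)]
  · rw [if_neg hgcd]
    rw [Finset.card_eq_zero.2, Nat.cast_zero]
    rw [Finset.filter_eq_empty_iff]
    intro pq hpq
    intro heq
    apply hgcd
    have h2 := (Finset.mem_filter.1 hpq).2.2
    have := Prod.ext_iff.1 heq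
    simp only at this
    rw [← this.1, ← this.2]
    exact h2


def msym (pq : (ℤ × ℤ) × (ℤ × ℤ)) : Sym2 (ℝ × ℝ) := Sym2.mk (e pq.1) (e pq.2)

end SegAux

/-- For `n ≥ 2`, `q ≥ 1`, the number of `(q+1)`-gridsegments equals `f_q(n)/2`. -/
theorem segCount_eq_half_fq (n q : ℕ) (hn : 2 ≤ n) (hq : 1 ≤ q) :
    2 * (segCount n (q + 1) : ℤ) = fq q n := by
  classical
  have hSeq : {s : Sym2 (ℝ × ℝ) | ∃ P Q : ℝ × ℝ, s = Sym2.mk P Q ∧ P ≠ Q ∧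
      P ∈ gridPts n ∧ Q ∈ gridPts n ∧ (segment ℝ P Q ∩ gridPts n).ncard = q + 1}
      = ↑((SegAux.T n q).image SegAux.msym) := by
    ext s
    simp only [Set.mem_setOf_eq, Finset.coe_image, Set.mem_image, Finset.mem_coe]
    constructor
    · rintro ⟨P, Q, hs, hne, hPg, hQg, hcard⟩
      obtain ⟨P', hP', rfl⟩ := SegAux.grid_eq hPg
      obtain ⟨Q', hQ', rfl⟩ := SegAux.grid_eq hQg
      have hne' : P' ≠ Q' := fun h => hne (by rw [h])
      have hgq : Int.gcd (Q'.1 - P'.1) (Q'.2 - P'.2) = q := by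
        have h := SegAux.seg_inter hP' hQ' hne'
        omega
      refine ⟨(P', Q'), ?_, hs.symm⟩
      simp only [SegAux.T, Finset.mem_filter, Finset.mem_product]
      exact ⟨⟨hP', hQ'⟩, hne', hgq⟩
    · rintro ⟨pq, hpq, rfl⟩
      simp only [SegAux.T, Finset.mem_filter, Finset.mem_product] at hpq
      obtain ⟨⟨hb1, hb2⟩, hne, hg⟩ := hpq
      refine ⟨SegAux.e pq.1, SegAux.e pq.2, rfl, fun h => hne (SegAux.e_inj h),
        SegAux.mem_grid.2 hb1, SegAux.mem_grid.2 hb2, ?_⟩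
      rw [SegAux.seg_inter hb1 hb2 hne, hg]
  have hfib : ∀ pq ∈ SegAux.T n q, SegAux.msym pq ∈ (SegAux.T n q).image SegAux.msym :=
    fun pq h => Finset.mem_image_of_mem _ h
  have hfibcard : ∀ s ∈ (SegAux.T n q).image SegAux.msym,
      ((SegAux.T n q).filter (fun pq => SegAux.msym pq = s)).card = 2 := by
    intro s hs
    obtain ⟨pq, hpq, rfl⟩ := Finset.mem_image.1 hs
    have hpq' := hpq
    simp only [SegAux.T, Finset.mem_filter, Finset.mem_product] at hpq'
    obtain ⟨⟨hb1, hb2⟩, hne, hg⟩ := hpq'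
    have hswap : pq.swap ∈ SegAux.T n q := by
      simp only [SegAux.T, Finset.mem_filter, Finset.mem_product, Prod.fst_swap, Prod.snd_swap]
      refine ⟨⟨hb2, hb1⟩, fun h => hne h.symm, ?_⟩
      have e1 : pq.1.1 - pq.2.1 = -(pq.2.1 - pq.1.1) := by ring
      have e2 : pq.1.2 - pq.2.2 = -(pq.2.2 - pq.1.2) := by ring
      rw [e1, e2, Int.neg_gcd, Int.gcd_neg]
      exact hg
    have hfilter : (SegAux.T n q).filter (fun r => SegAux.msym r = SegAux.msym pq)
        = {pq, pq.swap} := by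
      ext r
      simp only [Finset.mem_filter, Finset.mem_insert, Finset.mem_singleton]
      constructor
      · rintro ⟨hr, heq⟩
        rcases Sym2.eq_iff.1 heq with ⟨h1, h2⟩ | ⟨h1, h2⟩
        · left; exact Prod.ext (SegAux.e_inj h1) (SegAux.e_inj h2)
        · right; exact Prod.ext (SegAux.e_inj h1) (SegAux.e_inj h2)
      · rintro (rfl | rfl)
        · exact ⟨hpq, rfl⟩
        · exact ⟨hswap, Sym2.eq_swap⟩
    have hnotmem : pq ∉ ({pq.swap} : Finset ((ℤ × ℤ) × (ℤ × ℤ))) := by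
      simp only [Finset.mem_singleton]
      intro h
      exact hne (congrArg Prod.fst h)
    rw [hfilter, Finset.card_insert_of_notMem hnotmem, Finset.card_singleton]
  have h2card : (SegAux.T n q).card = 2 * ((SegAux.T n q).image SegAux.msym).card := by
    rw [Finset.card_eq_sum_card_fiberwise hfib, Finset.sum_congr rfl hfibcard,
      Finset.sum_const, smul_eq_mul, Nat.mul_comm]
  have hseg : segCount n (q + 1) = ((SegAux.T n q).image SegAux.msym).card := by
    unfold segCount
    rw [hSeq, Set.ncard_coe_finset]
  rw [hseg, ← SegAux.Tcard n q hq]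
  exact_mod_cast h2card.symm
end

section
/- For all integers n ≥ 2 and q ≥ 2, the number of lines in the plane passing through at least q points of the n×n grid {0,…,n−1}² equals (1/2)·(f_{q−1}(n) − f_q(n)), where f_q(n) = Σ_{−n<i,j<n, gcd(i,j)=q} (n−|i|)(n−|j|). -/
open Finset Real Filter

namespace GridLines

noncomputable def grid (n : ℕ) : Finset (ℤ × ℤ) := (Finset.Ico 0 (n:ℤ)) ×ˢ (Finset.Ico 0 (n:ℤ))

lemma mem_grid {n : ℕ} {p : ℤ × ℤ} :
    p ∈ grid n ↔ 0 ≤ p.1 ∧ p.1 < n ∧ 0 ≤ p.2 ∧ p.2 < n := by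
  simp [grid, Finset.mem_Ico, and_assoc]

def gcdv (v : ℤ × ℤ) : ℕ := Int.gcd v.1 v.2

def prim (v : ℤ × ℤ) : ℤ × ℤ := (v.1 / (gcdv v : ℤ), v.2 / (gcdv v : ℤ))

def cross (v w : ℤ × ℤ) : ℤ := v.1 * w.2 - v.2 * w.1

lemma gcdv_eq_zero_iff {v : ℤ × ℤ} : gcdv v = 0 ↔ v = 0 := by
  rw [gcdv, Int.gcd_eq_zero_iff, Prod.ext_iff]; rfl

lemma prim_spec {v : ℤ × ℤ} (hv : v ≠ 0) :
    v.1 = (gcdv v : ℤ) * (prim v).1 ∧ v.2 = (gcdv v : ℤ) * (prim v).2 ∧ gcdv (prim v) = 1 := by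
  have h1 : (gcdv v : ℤ) ∣ v.1 := Int.gcd_dvd_left _ _
  have h2 : (gcdv v : ℤ) ∣ v.2 := Int.gcd_dvd_right _ _
  have hg : 0 < gcdv v := Nat.pos_of_ne_zero (fun h => hv (gcdv_eq_zero_iff.1 h))
  refine ⟨?_, ?_, Int.gcd_div_gcd_div_gcd hg⟩
  · rw [prim, mul_comm]; exact (Int.ediv_mul_cancel h1).symm
  · rw [prim, mul_comm]; exact (Int.ediv_mul_cancel h2).symm

lemma gcdv_smul (k : ℤ) (d : ℤ × ℤ) : gcdv (k * d.1, k * d.2) = k.natAbs * gcdv d :=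
  Int.gcd_mul_left k d.1 d.2

lemma prim_smul_pos {d : ℤ × ℤ} (hd : gcdv d = 1) {k : ℤ} (hk : 0 < k) :
    prim (k * d.1, k * d.2) = d := by
  have hg : gcdv (k * d.1, k * d.2) = k.natAbs := by rw [gcdv_smul, hd, mul_one]
  have hk' : (k.natAbs : ℤ) = k := Int.natAbs_of_nonneg hk.le
  simp only [prim, hg, hk']
  exact Prod.ext (Int.mul_ediv_cancel_left _ hk.ne') (Int.mul_ediv_cancel_left _ hk.ne')

lemma prim_smul_neg {d : ℤ × ℤ} (hd : gcdv d = 1) {k : ℤ} (hk : k < 0) :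
    prim (k * d.1, k * d.2) = (-d.1, -d.2) := by
  have hg : gcdv (k * d.1, k * d.2) = k.natAbs := by rw [gcdv_smul, hd, mul_one]
  have hk' : (k.natAbs : ℤ) = -k := by omega
  simp only [prim, hg, hk']
  refine Prod.ext ?_ ?_
  · rw [show k * d.1 = (-k) * (-d.1) by ring, Int.mul_ediv_cancel_left _ (by omega)]
  · rw [show k * d.2 = (-k) * (-d.2) by ring, Int.mul_ediv_cancel_left _ (by omega)]

lemma cross_eq_zero_iff {d : ℤ × ℤ} (hd : gcdv d = 1) (w : ℤ × ℤ) :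
    cross d w = 0 ↔ ∃ k : ℤ, w = (k * d.1, k * d.2) := by
  constructor
  · intro h
    have h' : d.1 * w.2 = d.2 * w.1 := by rw [cross] at h; linarith
    rcases eq_or_ne d.1 0 with h1 | h1
    · have hd2 : d.2 = 1 ∨ d.2 = -1 := by
        have := hd; rw [gcdv, h1, Int.gcd] at this; simp at this; omega
      have hw1 : w.1 = 0 := by
        rcases hd2 with h2 | h2 <;> rw [h1, h2] at h' <;> omega
      refine ⟨w.2 / d.2, ?_⟩
      rcases hd2 with h2 | h2 <;> rw [Prod.ext_iff] <;> simp [h1, h2, hw1] <;> omega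
    · have hcop : IsCoprime d.1 d.2 := Int.isCoprime_iff_gcd_eq_one.2 hd
      have hdvd : d.1 ∣ w.1 := by
        have : d.1 ∣ d.2 * w.1 := ⟨w.2, by linarith⟩
        exact (IsCoprime.dvd_of_dvd_mul_left hcop this)
      obtain ⟨k, hk⟩ := hdvd
      refine ⟨k, Prod.ext (by rw [hk]; ring) ?_⟩
      have : d.1 * w.2 = d.1 * (k * d.2) := by rw [h', hk]; ring
      have h2 := mul_left_cancel₀ h1 this
      exact h2
  · rintro ⟨k, rfl⟩; simp [cross]; ring


/-- walking along a segment whose endpoints are in the grid stays in the grid -/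
lemma grid_convex {n : ℕ} {P d : ℤ × ℤ} {N k : ℤ} (hP : P ∈ grid n)
    (hN : (P.1 + N * d.1, P.2 + N * d.2) ∈ grid n) (h0 : 0 ≤ k) (hk : k ≤ N) :
    (P.1 + k * d.1, P.2 + k * d.2) ∈ grid n := by
  rw [mem_grid] at *
  simp only at *
  obtain ⟨a1, a2, a3, a4⟩ := hP
  obtain ⟨b1, b2, b3, b4⟩ := hN
  refine ⟨?_, ?_, ?_, ?_⟩
  · rcases le_or_gt 0 d.1 with h | h <;> nlinarith
  · rcases le_or_gt 0 d.1 with h | h <;> nlinarith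
  · rcases le_or_gt 0 d.2 with h | h <;> nlinarith
  · rcases le_or_gt 0 d.2 with h | h <;> nlinarith


lemma line_structure {n : ℕ} {P v : ℤ × ℤ} (hP : P ∈ grid n) (hv : v ≠ 0) :
    ∃ (P0 d : ℤ × ℤ) (m : ℕ), gcdv d = 1 ∧ 1 ≤ m ∧
      ∀ R : ℤ × ℤ, (R ∈ grid n ∧ cross v (R.1 - P.1, R.2 - P.2) = 0) ↔
        ∃ k : ℤ, 0 ≤ k ∧ k < (m : ℤ) ∧ R = (P0.1 + k * d.1, P0.2 + k * d.2) := by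
  obtain ⟨hv1, hv2, hd⟩ := prim_spec hv
  set d := prim v with hdval
  set g := gcdv v with hgval
  have hg0 : g ≠ 0 := fun h => hv (gcdv_eq_zero_iff.1 h)
  have hcrossiff : ∀ w : ℤ × ℤ, cross v w = 0 ↔ cross d w = 0 := by
    intro w
    have : cross v w = (g : ℤ) * cross d w := by
      simp only [cross]; rw [hv1, hv2]; ring
    rw [this, mul_eq_zero]
    simp [hg0]
  have hdne : d ≠ 0 := by
    intro h
    rw [h] at hd
    simp [gcdv, Int.gcd] at hd
  -- the set of valid parameters
  set K := (Finset.Icc (-(n:ℤ)) n).filter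
      (fun k => (P.1 + k * d.1, P.2 + k * d.2) ∈ grid n) with hKval
  have hmemK : ∀ k : ℤ, k ∈ K ↔ (P.1 + k * d.1, P.2 + k * d.2) ∈ grid n := by
    intro k
    rw [hKval, Finset.mem_filter, Finset.mem_Icc]
    constructor
    · exact fun h => h.2
    · intro h
      refine ⟨?_, h⟩
      have hPg := mem_grid.1 hP
      have hg := mem_grid.1 h
      simp only at hg
      have hd1 : d.1 ≠ 0 ∨ d.2 ≠ 0 := by
        by_contra hc
        push_neg at hc
        exact hdne (Prod.ext hc.1 hc.2)
      have key : ∀ (x e : ℤ), e ≠ 0 → 0 ≤ x → x < n → 0 ≤ x + k * e → x + k * e < n →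
          -(n:ℤ) ≤ k ∧ k ≤ n := by
        intro x e he hx1 hx2 hy1 hy2
        have h3 := Int.natAbs_mul k e
        have h4 : k.natAbs ≤ (k * e).natAbs := by
          rw [h3]
          exact Nat.le_mul_of_pos_right _ (by omega)
        omega
      rcases hd1 with h | h
      · exact key P.1 d.1 h hPg.1 hPg.2.1 hg.1 hg.2.1
      · exact key P.2 d.2 h hPg.2.2.1 hPg.2.2.2 hg.2.2.1 hg.2.2.2
  have h0K : (0 : ℤ) ∈ K := by
    rw [hmemK]; simpa using hP
  have hKne : K.Nonempty := ⟨0, h0K⟩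
  set a := K.min' hKne with haval
  set b := K.max' hKne with hbval
  have hab : a ≤ b := K.min'_le b (K.max'_mem hKne)
  have hconv : ∀ k : ℤ, a ≤ k → k ≤ b → k ∈ K := by
    intro k h1 h2
    have hA := (hmemK a).1 (K.min'_mem hKne)
    have hB := (hmemK b).1 (K.max'_mem hKne)
    rw [hmemK]
    have hB' : ((P.1 + a * d.1) + (b - a) * d.1, (P.2 + a * d.2) + (b - a) * d.2) ∈ grid n := by
      have : ((P.1 + a * d.1) + (b - a) * d.1, (P.2 + a * d.2) + (b - a) * d.2)
          = (P.1 + b * d.1, P.2 + b * d.2) := by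
        rw [Prod.ext_iff]; constructor <;> (simp only; ring)
      rw [this]; exact hB
    have := grid_convex hA hB' (by omega : (0:ℤ) ≤ k - a) (by omega : k - a ≤ b - a)
    have heq : ((P.1 + a * d.1) + (k - a) * d.1, (P.2 + a * d.2) + (k - a) * d.2)
        = (P.1 + k * d.1, P.2 + k * d.2) := by
      rw [Prod.ext_iff]; constructor <;> (simp only; ring)
    rwa [heq] at this
  have hKiff : ∀ k : ℤ, k ∈ K ↔ a ≤ k ∧ k ≤ b := by
    intro k
    exact ⟨fun h => ⟨K.min'_le k h, K.le_max' k h⟩, fun h => hconv k h.1 h.2⟩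
  refine ⟨(P.1 + a * d.1, P.2 + a * d.2), d, (b - a + 1).toNat, hd, by omega, ?_⟩
  intro R
  constructor
  · rintro ⟨hRg, hRc⟩
    rw [hcrossiff, cross_eq_zero_iff hd] at hRc
    obtain ⟨j, hj⟩ := hRc
    rw [Prod.ext_iff] at hj
    simp only at hj
    have hR : R = (P.1 + j * d.1, P.2 + j * d.2) := by
      rw [Prod.ext_iff]; constructor <;> simp only <;> omega
    have hjK : j ∈ K := by rw [hmemK, ← hR]; exact hRg
    rw [hKiff] at hjK
    refine ⟨j - a, by omega, by omega, ?_⟩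
    rw [hR, Prod.ext_iff]; constructor <;> (simp only; ring)
  · rintro ⟨k, hk0, hkm, rfl⟩
    have hkK : k + a ∈ K := by rw [hKiff]; omega
    rw [hmemK] at hkK
    constructor
    · have : ((P.1 + a * d.1) + k * d.1, (P.2 + a * d.2) + k * d.2)
          = (P.1 + (k + a) * d.1, P.2 + (k + a) * d.2) := by
        rw [Prod.ext_iff]; constructor <;> (simp only; ring)
      rw [this]; exact hkK
    · rw [hcrossiff, cross_eq_zero_iff hd]
      exact ⟨k + a, by rw [Prod.ext_iff]; constructor <;> (simp only; ring)⟩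


/-- the embedding of the lattice into the real plane -/
def emb (p : ℤ × ℤ) : ℝ × ℝ := ((p.1 : ℝ), (p.2 : ℝ))

lemma emb_inj : Function.Injective emb := by
  intro p q h
  rw [emb, emb, Prod.ext_iff] at h
  simp only at h
  exact Prod.ext (by exact_mod_cast h.1) (by exact_mod_cast h.2)

lemma gridPts_eq (n : ℕ) : gridPts n = emb '' ↑(grid n) := by
  ext p
  simp only [gridPts, Set.mem_setOf_eq, Set.mem_image, Finset.mem_coe, mem_grid]
  constructor
  · rintro ⟨a, b, h1, h2, h3, h4, rfl⟩
    exact ⟨(a, b), ⟨h1, h2, h3, h4⟩, rfl⟩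
  · rintro ⟨⟨a, b⟩, ⟨h1, h2, h3, h4⟩, rfl⟩
    exact ⟨a, b, h1, h2, h3, h4, rfl⟩

/-- the line through two points of the plane -/
def lineThrough (A B : ℝ × ℝ) : Set (ℝ × ℝ) :=
  {p | (B.1 - A.1) * (p.2 - A.2) = (B.2 - A.2) * (p.1 - A.1)}

lemma mem_lineThrough_left {A B : ℝ × ℝ} : A ∈ lineThrough A B := by
  simp [lineThrough]

lemma mem_lineThrough_right {A B : ℝ × ℝ} : B ∈ lineThrough A B := by
  simp [lineThrough, mul_comm]

lemma isLine_lineThrough {A B : ℝ × ℝ} (h : A ≠ B) : IsLine (lineThrough A B) := by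
  refine ⟨A.2 - B.2, B.1 - A.1, -((A.2 - B.2) * A.1 + (B.1 - A.1) * A.2), ?_, ?_⟩
  · intro hc
    rw [Prod.mk.injEq] at hc
    exact h (Prod.ext (by linarith [hc.2]) (by linarith [hc.1]))
  · ext p
    simp only [lineThrough, Set.mem_setOf_eq]
    constructor <;> intro hp <;> nlinarith [hp]

lemma line_eq_lineThrough {L : Set (ℝ × ℝ)} {A B : ℝ × ℝ} (hL : IsLine L)
    (hA : A ∈ L) (hB : B ∈ L) (hne : A ≠ B) : L = lineThrough A B := by
  obtain ⟨a, b, c, h0, rfl⟩ := hL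
  simp only [Set.mem_setOf_eq] at hA hB
  have hab : a ≠ 0 ∨ b ≠ 0 := by
    by_contra hc
    push_neg at hc
    exact h0 (Prod.ext hc.1 hc.2)
  have hu : a * (B.1 - A.1) + b * (B.2 - A.2) = 0 := by linarith
  have hune : B.1 - A.1 ≠ 0 ∨ B.2 - A.2 ≠ 0 := by
    by_contra hc
    push_neg at hc
    exact hne (Prod.ext (by linarith [hc.1]) (by linarith [hc.2]))
  ext p
  simp only [Set.mem_setOf_eq, lineThrough]
  constructor
  · intro hp
    have hw : a * (p.1 - A.1) + b * (p.2 - A.2) = 0 := by linarith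
    rcases hab with h | h
    · apply mul_left_cancel₀ h
      linear_combination (p.2 - A.2) * hu - (B.2 - A.2) * hw
    · apply mul_left_cancel₀ h
      linear_combination (B.1 - A.1) * hw - (p.1 - A.1) * hu
  · intro hp
    rcases hune with h | h
    · have : (B.1 - A.1) * (a * p.1 + b * p.2 + c) = 0 := by
        linear_combination (p.1 - A.1) * hu + b * hp + (B.1 - A.1) * hA
      exact (mul_eq_zero.1 this).resolve_left h
    · have : (B.2 - A.2) * (a * p.1 + b * p.2 + c) = 0 := by
        linear_combination (p.2 - A.2) * hu - a * hp + (B.2 - A.2) * hA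
      exact (mul_eq_zero.1 this).resolve_left h

lemma emb_mem_lineThrough {A B R : ℤ × ℤ} :
    emb R ∈ lineThrough (emb A) (emb B) ↔ cross (B.1 - A.1, B.2 - A.2) (R.1 - A.1, R.2 - A.2) = 0 := by
  simp only [lineThrough, emb, Set.mem_setOf_eq, cross]
  constructor
  · intro h
    have : ((B.1 - A.1) * (R.2 - A.2) - (B.2 - A.2) * (R.1 - A.1) : ℝ) = 0 := by
      push_cast; nlinarith
    exact_mod_cast this
  · intro h
    have : ((B.1 - A.1) * (R.2 - A.2) - (B.2 - A.2) * (R.1 - A.1) : ℝ) = 0 := by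
      exact_mod_cast h
    push_cast at this ⊢
    nlinarith


noncomputable def pairs (n g : ℕ) : Finset ((ℤ × ℤ) × (ℤ × ℤ)) :=
  ((grid n) ×ˢ (grid n)).filter
    (fun pq => gcdv (pq.2.1 - pq.1.1, pq.2.2 - pq.1.2) = g)

lemma mem_pairs {n g : ℕ} {pq : (ℤ × ℤ) × (ℤ × ℤ)} :
    pq ∈ pairs n g ↔ pq.1 ∈ grid n ∧ pq.2 ∈ grid n ∧
      gcdv (pq.2.1 - pq.1.1, pq.2.2 - pq.1.2) = g := by
  simp [pairs, Finset.mem_filter, Finset.mem_product, and_assoc]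

/-- one-coordinate count -/
lemma count_coord (n : ℕ) (i : ℤ) (h1 : -(n:ℤ) < i) (h2 : i < n) :
    (((Finset.Ico (0:ℤ) n).filter (fun a => 0 ≤ a + i ∧ a + i < n)).card : ℤ)
      = (n : ℤ) - |i| := by
  have : (Finset.Ico (0:ℤ) n).filter (fun a => 0 ≤ a + i ∧ a + i < n)
      = Finset.Ico (max 0 (-i)) (min (n:ℤ) ((n:ℤ) - i)) := by
    ext a
    simp only [Finset.mem_filter, Finset.mem_Ico, le_max_iff, max_le_iff, lt_min_iff,
      le_min_iff]
    omega
  rw [this, Int.card_Ico]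
  rw [Int.abs_eq_natAbs]
  omega

lemma card_pairs (n g : ℕ) : ((pairs n g).card : ℤ) = fq g n := by
  classical
  have hmap : ∀ pq ∈ pairs n g,
      (pq.2.1 - pq.1.1, pq.2.2 - pq.1.2) ∈ (Finset.Ioo (-(n:ℤ)) n) ×ˢ (Finset.Ioo (-(n:ℤ)) n) := by
    intro pq hpq
    rw [mem_pairs] at hpq
    have h1 := mem_grid.1 hpq.1
    have h2 := mem_grid.1 hpq.2.1
    simp only [Finset.mem_product, Finset.mem_Ioo]
    omega
  rw [Finset.card_eq_sum_card_fiberwise hmap]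
  rw [fq, ← Finset.sum_product']
  push_cast
  apply Finset.sum_congr rfl
  rintro ⟨i, j⟩ hij
  simp only [Finset.mem_product, Finset.mem_Ioo] at hij
  by_cases hg : Int.gcd i j = g
  · rw [if_pos hg]
    -- fiber = {(P, P + (i,j)) : P ∈ grid, P + (i,j) ∈ grid}
    have hbij : ((pairs n g).filter
        (fun pq => (pq.2.1 - pq.1.1, pq.2.2 - pq.1.2) = (i, j))).card
        = ((grid n).filter (fun P => (P.1 + i, P.2 + j) ∈ grid n)).card := by
      apply Finset.card_bij (fun pq _ => pq.1)
      · rintro ⟨P, Q⟩ h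
        simp only [Finset.mem_filter, mem_pairs, Prod.mk.injEq] at h
        simp only [Finset.mem_filter]
        refine ⟨h.1.1, ?_⟩
        have : Q = (P.1 + i, P.2 + j) := by
          rw [Prod.ext_iff]; constructor <;> simp only <;> omega
        rw [← this]; exact h.1.2.1
      · rintro ⟨P, Q⟩ h ⟨P', Q'⟩ h' heq
        simp only [Finset.mem_filter, mem_pairs, Prod.mk.injEq] at h h'
        simp only at heq
        subst heq
        have : Q = Q' := by
          rw [Prod.ext_iff]; constructor <;> omega
        rw [this]
      · intro P hP
        simp only [Finset.mem_filter] at hP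
        refine ⟨(P, (P.1 + i, P.2 + j)), ?_, rfl⟩
        simp only [Finset.mem_filter, mem_pairs, Prod.mk.injEq]
        refine ⟨⟨hP.1, hP.2, ?_⟩, by omega, by omega⟩
        simp only [add_sub_cancel_left]
        exact hg
    rw [hbij]
    have hsplit : (grid n).filter (fun P => (P.1 + i, P.2 + j) ∈ grid n)
        = ((Finset.Ico (0:ℤ) n).filter (fun a => 0 ≤ a + i ∧ a + i < n)) ×ˢ
          ((Finset.Ico (0:ℤ) n).filter (fun b => 0 ≤ b + j ∧ b + j < n)) := by
      ext P
      simp only [Finset.mem_filter, mem_grid, Finset.mem_product, Finset.mem_Ico]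
      omega
    rw [hsplit, Finset.card_product]
    push_cast
    rw [count_coord n i hij.1.1 hij.1.2, count_coord n j hij.2.1 hij.2.2]
  · rw [if_neg hg]
    convert Nat.cast_zero
    rw [Finset.card_eq_zero, Finset.filter_eq_empty_iff]
    rintro ⟨P, Q⟩ h
    rw [mem_pairs] at h
    intro hc
    rw [Prod.mk.injEq] at hc
    apply hg
    rw [← h.2.2, gcdv]
    simp only
    rw [hc.1, hc.2]


/-- the primitive direction from the first to the second point of a pair -/
def dirOf (pq : (ℤ × ℤ) × (ℤ × ℤ)) : ℤ × ℤ := prim (pq.2.1 - pq.1.1, pq.2.2 - pq.1.2)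

/-- the pair's second point moved one primitive step further -/
def extPt (pq : (ℤ × ℤ) × (ℤ × ℤ)) : ℤ × ℤ :=
  (pq.2.1 + (dirOf pq).1, pq.2.2 + (dirOf pq).2)

/-- the `(q-1)`-pairs whose one-step extension leaves the grid -/
noncomputable def Tset (n q : ℕ) : Finset ((ℤ × ℤ) × (ℤ × ℤ)) :=
  (pairs n (q - 1)).filter (fun pq => extPt pq ∉ grid n)

lemma pairs_basic {n g : ℕ} {pq : (ℤ × ℤ) × (ℤ × ℤ)} (h : pq ∈ pairs n g) (hg : 1 ≤ g) :
    (pq.2.1 - pq.1.1) = (g : ℤ) * (dirOf pq).1 ∧ (pq.2.2 - pq.1.2) = (g : ℤ) * (dirOf pq).2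
      ∧ gcdv (dirOf pq) = 1 := by
  rw [mem_pairs] at h
  have hv : (pq.2.1 - pq.1.1, pq.2.2 - pq.1.2) ≠ 0 := by
    intro hc
    rw [← gcdv_eq_zero_iff] at hc
    omega
  have := prim_spec hv
  rw [h.2.2] at this
  exact this

lemma card_pairs_split (n q : ℕ) (hq : 2 ≤ q) :
    (pairs n (q - 1)).card = (Tset n q).card + (pairs n q).card := by
  classical
  rw [Tset]
  rw [← Finset.card_filter_add_card_filter_not
    (s := pairs n (q-1)) (p := fun pq => extPt pq ∉ grid n)]
  congr 1
  -- bijection between the non-escaping (q-1)-pairs and the q-pairs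
  apply Finset.card_bij' (fun pq _ => (pq.1, extPt pq))
    (fun pq _ => (pq.1, (pq.2.1 - (dirOf pq).1, pq.2.2 - (dirOf pq).2)))
  · rintro pq h
    simp only [Finset.mem_filter, not_not] at h
    obtain ⟨hmem, hext⟩ := h
    obtain ⟨h1, h2, h3⟩ := pairs_basic hmem (by omega)
    rw [(by omega : ((q - 1 : ℕ) : ℤ) = (q : ℤ) - 1)] at h1 h2
    rw [mem_pairs] at hmem ⊢
    refine ⟨hmem.1, hext, ?_⟩
    have e1 : (extPt pq).1 - pq.1.1 = (q : ℤ) * (dirOf pq).1 := by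
      show pq.2.1 + (dirOf pq).1 - pq.1.1 = (q : ℤ) * (dirOf pq).1
      linear_combination h1
    have e2 : (extPt pq).2 - pq.1.2 = (q : ℤ) * (dirOf pq).2 := by
      show pq.2.2 + (dirOf pq).2 - pq.1.2 = (q : ℤ) * (dirOf pq).2
      linear_combination h2
    simp only [e1, e2]
    rw [gcdv_smul, h3, mul_one, Int.natAbs_natCast]
  · rintro pq hmemq
    have h := mem_pairs.1 hmemq
    obtain ⟨h1, h2, h3⟩ := pairs_basic hmemq (by omega)
    set d := dirOf pq with hd
    -- the shortened pair
    have hQ' : (pq.2.1 - d.1, pq.2.2 - d.2) ∈ grid n := by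
      have hform : (pq.2.1 - d.1, pq.2.2 - d.2)
          = (pq.1.1 + ((q:ℤ) - 1) * d.1, pq.1.2 + ((q:ℤ) - 1) * d.2) := by
        rw [Prod.ext_iff]
        constructor
        · show pq.2.1 - d.1 = pq.1.1 + ((q:ℤ) - 1) * d.1
          linear_combination h1
        · show pq.2.2 - d.2 = pq.1.2 + ((q:ℤ) - 1) * d.2
          linear_combination h2
      have hQ : (pq.1.1 + (q:ℤ) * d.1, pq.1.2 + (q:ℤ) * d.2) ∈ grid n := by
        have : (pq.1.1 + (q:ℤ) * d.1, pq.1.2 + (q:ℤ) * d.2) = pq.2 := by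
          rw [Prod.ext_iff]
          constructor
          · show pq.1.1 + (q:ℤ) * d.1 = pq.2.1
            linear_combination -h1
          · show pq.1.2 + (q:ℤ) * d.2 = pq.2.2
            linear_combination -h2
        rw [this]; exact h.2.1
      rw [hform]
      exact grid_convex h.1 hQ (by omega) (by omega)
    have hgcd' : gcdv ((pq.2.1 - d.1) - pq.1.1, (pq.2.2 - d.2) - pq.1.2) = q - 1 := by
      have e1 : (pq.2.1 - d.1) - pq.1.1 = ((q:ℤ) - 1) * d.1 := by linear_combination h1
      have e2 : (pq.2.2 - d.2) - pq.1.2 = ((q:ℤ) - 1) * d.2 := by linear_combination h2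
      rw [e1, e2, gcdv_smul, h3, mul_one]
      omega
    have hdir' : dirOf (pq.1, (pq.2.1 - d.1, pq.2.2 - d.2)) = d := by
      rw [dirOf]
      simp only
      have e1 : (pq.2.1 - d.1) - pq.1.1 = ((q:ℤ) - 1) * d.1 := by linear_combination h1
      have e2 : (pq.2.2 - d.2) - pq.1.2 = ((q:ℤ) - 1) * d.2 := by linear_combination h2
      rw [e1, e2]
      exact prim_smul_pos h3 (by omega)
    simp only [Finset.mem_filter, not_not, mem_pairs]
    refine ⟨⟨h.1, hQ', hgcd'⟩, ?_⟩
    rw [extPt, hdir']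
    simp only
    have : (pq.2.1 - d.1 + d.1, pq.2.2 - d.2 + d.2) = pq.2 := by
      rw [Prod.ext_iff]; constructor <;> simp only <;> omega
    rw [this]; exact h.2.1
  · rintro pq h
    simp only [Finset.mem_filter, not_not] at h
    obtain ⟨h1, h2, h3⟩ := pairs_basic h.1 (by omega)
    rw [(by omega : ((q - 1 : ℕ) : ℤ) = (q : ℤ) - 1)] at h1 h2
    have hdir : dirOf (pq.1, extPt pq) = dirOf pq := by
      rw [dirOf, extPt]
      simp only
      have e1 : pq.2.1 + (dirOf pq).1 - pq.1.1 = (q : ℤ) * (dirOf pq).1 := by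
        linear_combination h1
      have e2 : pq.2.2 + (dirOf pq).2 - pq.1.2 = (q : ℤ) * (dirOf pq).2 := by
        linear_combination h2
      rw [e1, e2]
      exact prim_smul_pos h3 (by positivity)
    rw [hdir, extPt]
    rw [Prod.ext_iff]
    refine ⟨rfl, ?_⟩
    rw [Prod.ext_iff]
    constructor <;> simp only <;> omega
  · rintro pq hmemq
    have h := mem_pairs.1 hmemq
    obtain ⟨h1, h2, h3⟩ := pairs_basic hmemq (by omega)
    set d := dirOf pq with hd
    have hdir' : dirOf (pq.1, (pq.2.1 - d.1, pq.2.2 - d.2)) = d := by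
      rw [dirOf]
      simp only
      have e1 : (pq.2.1 - d.1) - pq.1.1 = ((q:ℤ) - 1) * d.1 := by linear_combination h1
      have e2 : (pq.2.2 - d.2) - pq.1.2 = ((q:ℤ) - 1) * d.2 := by linear_combination h2
      rw [e1, e2]
      exact prim_smul_pos h3 (by omega)
    rw [extPt]
    simp only [hdir']
    rw [Prod.ext_iff]
    refine ⟨rfl, ?_⟩
    rw [Prod.ext_iff]
    constructor <;> simp only <;> omega


lemma param_inj {P0 d : ℤ × ℤ} (hd : d ≠ 0) {k k' : ℤ}
    (h : (P0.1 + k * d.1, P0.2 + k * d.2) = (P0.1 + k' * d.1, P0.2 + k' * d.2)) : k = k' := by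
  rw [Prod.mk.injEq] at h
  have h1 : (k - k') * d.1 = 0 := by linear_combination h.1
  have h2 : (k - k') * d.2 = 0 := by linear_combination h.2
  rcases mul_eq_zero.1 h1 with h | h
  · omega
  · rcases mul_eq_zero.1 h2 with h' | h'
    · omega
    · exact absurd (Prod.ext h h') hd

/-- Master structure of a line through two distinct gridpoints. -/
lemma line_master {n : ℕ} {A0 B0 : ℤ × ℤ} (hA : A0 ∈ grid n) (hB : B0 ∈ grid n)
    (hne : A0 ≠ B0) :
    ∃ (P0 d : ℤ × ℤ) (m : ℕ), d ≠ 0 ∧ gcdv d = 1 ∧ 2 ≤ m ∧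
      ((lineThrough (emb A0) (emb B0)) ∩ gridPts n).ncard = m ∧
      (∀ k : ℤ, ((P0.1 + k * d.1, P0.2 + k * d.2) ∈ grid n) ↔ 0 ≤ k ∧ k < (m:ℤ)) ∧
      (∀ R : ℤ × ℤ, R ∈ grid n →
        (emb R ∈ lineThrough (emb A0) (emb B0) ↔
          ∃ k : ℤ, 0 ≤ k ∧ k < (m:ℤ) ∧ R = (P0.1 + k * d.1, P0.2 + k * d.2))) := by
  classical
  set v : ℤ × ℤ := (B0.1 - A0.1, B0.2 - A0.2) with hv
  have hvne : v ≠ 0 := by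
    intro hc
    have h1 : v.1 = 0 := by rw [hc]; rfl
    have h2 : v.2 = 0 := by rw [hc]; rfl
    rw [hv] at h1 h2
    simp only at h1 h2
    exact hne (Prod.ext (by omega) (by omega))
  obtain ⟨P0, d, m, hd1, hm1, hiff⟩ := line_structure hA hvne
  have hdne : d ≠ 0 := by
    intro h
    rw [h] at hd1
    simp [gcdv, Int.gcd] at hd1
  -- characterization of grid points on the line
  have hmem : ∀ R : ℤ × ℤ, R ∈ grid n →
      (emb R ∈ lineThrough (emb A0) (emb B0) ↔
        ∃ k : ℤ, 0 ≤ k ∧ k < (m:ℤ) ∧ R = (P0.1 + k * d.1, P0.2 + k * d.2)) := by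
    intro R hR
    rw [emb_mem_lineThrough]
    constructor
    · intro h
      exact (hiff R).1 ⟨hR, h⟩
    · intro h
      exact ((hiff R).2 h).2
  -- A0 and B0 are on the line
  obtain ⟨kA, hkA0, hkAm, hArep⟩ := (hmem A0 hA).1 mem_lineThrough_left
  obtain ⟨kB, hkB0, hkBm, hBrep⟩ := (hmem B0 hB).1 mem_lineThrough_right
  have hkAB : kA ≠ kB := by
    intro h
    apply hne
    rw [hArep, hBrep, h]
  -- grid membership of parameterized points
  have hgrid : ∀ k : ℤ, ((P0.1 + k * d.1, P0.2 + k * d.2) ∈ grid n) ↔ 0 ≤ k ∧ k < (m:ℤ) := by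
    intro k
    constructor
    · intro h
      have hcross : cross v ((P0.1 + k * d.1) - A0.1, (P0.2 + k * d.2) - A0.2) = 0 := by
        rw [Prod.ext_iff] at hArep hBrep
        simp only at hArep hBrep
        rw [hv, cross]
        simp only
        rw [hArep.1, hArep.2, hBrep.1, hBrep.2]
        ring
      obtain ⟨k', h0, hm, heq⟩ := (hiff _).1 ⟨h, hcross⟩
      have := param_inj hdne heq
      omega
    · rintro ⟨h0, hm⟩
      exact ((hiff _).2 ⟨k, h0, hm, rfl⟩).1
  -- the finset of gridpoints on the line
  set S : Finset (ℤ × ℤ) := (grid n).filter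
      (fun R => cross v (R.1 - A0.1, R.2 - A0.2) = 0) with hS
  have hScard : S.card = m := by
    have hSim : S = Finset.image (fun k : ℕ => (P0.1 + (k:ℤ) * d.1, P0.2 + (k:ℤ) * d.2))
        (Finset.range m) := by
      ext R
      simp only [hS, Finset.mem_filter, Finset.mem_image, Finset.mem_range]
      constructor
      · intro h
        obtain ⟨k, h0, hm, heq⟩ := (hiff R).1 ⟨h.1, h.2⟩
        refine ⟨k.toNat, by omega, ?_⟩
        rw [heq]
        congr 1 <;> rw [Int.toNat_of_nonneg h0]
      · rintro ⟨k, hk, rfl⟩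
        have := (hiff _).2 ⟨(k:ℤ), by positivity, by exact_mod_cast hk, rfl⟩
        exact ⟨this.1, this.2⟩
    rw [hSim, Finset.card_image_of_injOn, Finset.card_range]
    intro k _ k' _ h
    have := param_inj hdne h
    exact_mod_cast this
  have hncard : ((lineThrough (emb A0) (emb B0)) ∩ gridPts n).ncard = m := by
    have hset : (lineThrough (emb A0) (emb B0)) ∩ gridPts n = emb '' ↑S := by
      ext p
      constructor
      · rintro ⟨hpL, hpG⟩
        rw [gridPts_eq] at hpG
        obtain ⟨R, hR, rfl⟩ := hpG
        refine ⟨R, ?_, rfl⟩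
        rw [Finset.mem_coe, hS, Finset.mem_filter]
        refine ⟨hR, ?_⟩
        rw [← emb_mem_lineThrough]
        exact hpL
      · rintro ⟨R, hR, rfl⟩
        rw [Finset.mem_coe, hS, Finset.mem_filter] at hR
        constructor
        · rw [emb_mem_lineThrough]
          exact hR.2
        · rw [gridPts_eq]
          exact ⟨R, hR.1, rfl⟩
    rw [hset, Set.ncard_image_of_injective _ emb_inj, Set.ncard_coe_finset, hScard]
  have hm2 : 2 ≤ m := by
    have h1 : 0 ≤ kA ∧ kA < (m:ℤ) := ⟨hkA0, hkAm⟩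
    omega
  exact ⟨P0, d, m, hdne, hd1, hm2, hncard, hgrid, hmem⟩


section Fiber

variable {n q : ℕ} {A0 B0 P0 d : ℤ × ℤ} {m : ℕ}

/-- the two extremal pairs on a line -/
def ex1 (P0 d : ℤ × ℤ) (m q : ℕ) : (ℤ × ℤ) × (ℤ × ℤ) :=
  ((P0.1 + ((m:ℤ) - q) * d.1, P0.2 + ((m:ℤ) - q) * d.2),
   (P0.1 + ((m:ℤ) - 1) * d.1, P0.2 + ((m:ℤ) - 1) * d.2))

def ex2 (P0 d : ℤ × ℤ) (q : ℕ) : (ℤ × ℤ) × (ℤ × ℤ) :=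
  ((P0.1 + ((q:ℤ) - 1) * d.1, P0.2 + ((q:ℤ) - 1) * d.2), P0)

theorem fiber_forward (hq : 2 ≤ q)
    (hdne : d ≠ 0) (hd1 : gcdv d = 1)
    (hgrid : ∀ k : ℤ, ((P0.1 + k * d.1, P0.2 + k * d.2) ∈ grid n) ↔ 0 ≤ k ∧ k < (m:ℤ))
    (hmem : ∀ R : ℤ × ℤ, R ∈ grid n →
      (emb R ∈ lineThrough (emb A0) (emb B0) ↔
        ∃ k : ℤ, 0 ≤ k ∧ k < (m:ℤ) ∧ R = (P0.1 + k * d.1, P0.2 + k * d.2)))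
    {pq : (ℤ × ℤ) × (ℤ × ℤ)} (hT : pq ∈ Tset n q)
    (hL : lineThrough (emb pq.1) (emb pq.2) = lineThrough (emb A0) (emb B0)) :
    q ≤ m ∧ (pq = ex1 P0 d m q ∨ pq = ex2 P0 d q) := by
  obtain ⟨P, R⟩ := pq
  rw [Tset, Finset.mem_filter, mem_pairs] at hT
  obtain ⟨⟨hPg, hRg, hgcd⟩, hext⟩ := hT
  simp only at hPg hRg hgcd hext hL
  have hPL : emb P ∈ lineThrough (emb A0) (emb B0) := by
    rw [← hL]; exact mem_lineThrough_left
  have hRL : emb R ∈ lineThrough (emb A0) (emb B0) := by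
    rw [← hL]; exact mem_lineThrough_right
  obtain ⟨i, hi0, him, hPrep⟩ := (hmem P hPg).1 hPL
  obtain ⟨j, hj0, hjm, hRrep⟩ := (hmem R hRg).1 hRL
  rw [Prod.ext_iff] at hPrep hRrep
  simp only at hPrep hRrep
  have hRP1 : R.1 - P.1 = (j - i) * d.1 := by
    rw [hPrep.1, hRrep.1]; ring
  have hRP2 : R.2 - P.2 = (j - i) * d.2 := by
    rw [hPrep.2, hRrep.2]; ring
  rw [hRP1, hRP2, gcdv_smul, hd1, mul_one] at hgcd
  have hcase : j - i = (q:ℤ) - 1 ∨ j - i = -((q:ℤ) - 1) := by omega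
  rcases hcase with hc | hc
  · -- pq = ex1
    have hdir : dirOf (P, R) = d := by
      rw [dirOf]
      simp only
      rw [hRP1, hRP2, hc]
      exact prim_smul_pos hd1 (by omega)
    have hextpt : extPt (P, R) = (P0.1 + (j+1) * d.1, P0.2 + (j+1) * d.2) := by
      rw [extPt, hdir]
      simp only
      rw [Prod.mk.injEq]
      constructor
      · rw [hRrep.1]; ring
      · rw [hRrep.2]; ring
    rw [hextpt, hgrid] at hext
    have hj : j = (m:ℤ) - 1 := by omega
    have hqm : q ≤ m := by omega
    refine ⟨hqm, Or.inl ?_⟩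
    rw [ex1, Prod.mk.injEq]
    constructor
    · rw [Prod.ext_iff]
      refine ⟨?_, ?_⟩ <;> simp only
      · rw [hPrep.1, (by omega : i = (m:ℤ) - q)]
      · rw [hPrep.2, (by omega : i = (m:ℤ) - q)]
    · rw [Prod.ext_iff]
      refine ⟨?_, ?_⟩ <;> simp only
      · rw [hRrep.1, hj]
      · rw [hRrep.2, hj]
  · -- pq = ex2
    have hdir : dirOf (P, R) = (-d.1, -d.2) := by
      rw [dirOf]
      simp only
      rw [hRP1, hRP2, hc]
      exact prim_smul_neg hd1 (by omega)
    have hextpt : extPt (P, R) = (P0.1 + (j-1) * d.1, P0.2 + (j-1) * d.2) := by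
      rw [extPt, hdir]
      simp only
      rw [Prod.mk.injEq]
      constructor
      · rw [hRrep.1]; ring
      · rw [hRrep.2]; ring
    rw [hextpt, hgrid] at hext
    have hj : j = 0 := by omega
    have hi : i = (q:ℤ) - 1 := by omega
    have hqm : q ≤ m := by omega
    refine ⟨hqm, Or.inr ?_⟩
    rw [ex2, Prod.mk.injEq]
    constructor
    · rw [Prod.ext_iff]
      refine ⟨?_, ?_⟩ <;> simp only
      · rw [hPrep.1, hi]
      · rw [hPrep.2, hi]
    · rw [Prod.ext_iff]
      constructor
      · rw [hRrep.1, hj]; ring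
      · rw [hRrep.2, hj]; ring

theorem fiber_backward (hq : 2 ≤ q) (hqm : q ≤ m)
    (hdne : d ≠ 0) (hd1 : gcdv d = 1) (hne : A0 ≠ B0)
    (hgrid : ∀ k : ℤ, ((P0.1 + k * d.1, P0.2 + k * d.2) ∈ grid n) ↔ 0 ≤ k ∧ k < (m:ℤ))
    (hmem : ∀ R : ℤ × ℤ, R ∈ grid n →
      (emb R ∈ lineThrough (emb A0) (emb B0) ↔
        ∃ k : ℤ, 0 ≤ k ∧ k < (m:ℤ) ∧ R = (P0.1 + k * d.1, P0.2 + k * d.2))) :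
    (ex1 P0 d m q ∈ Tset n q ∧
      lineThrough (emb (ex1 P0 d m q).1) (emb (ex1 P0 d m q).2) = lineThrough (emb A0) (emb B0)) ∧
    (ex2 P0 d q ∈ Tset n q ∧
      lineThrough (emb (ex2 P0 d q).1) (emb (ex2 P0 d q).2) = lineThrough (emb A0) (emb B0)) ∧
    ex1 P0 d m q ≠ ex2 P0 d q := by
  have hLline : IsLine (lineThrough (emb A0) (emb B0)) :=
    isLine_lineThrough (fun h => hne (emb_inj h))
  have hparam_mem : ∀ k : ℤ, 0 ≤ k → k < (m:ℤ) →
      emb (P0.1 + k * d.1, P0.2 + k * d.2) ∈ lineThrough (emb A0) (emb B0) := by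
    intro k h0 hk
    rw [hmem _ ((hgrid k).2 ⟨h0, hk⟩)]
    exact ⟨k, h0, hk, rfl⟩
  have hpne : ∀ k k' : ℤ, k ≠ k' →
      ((P0.1 + k * d.1, P0.2 + k * d.2) : ℤ × ℤ) ≠ (P0.1 + k' * d.1, P0.2 + k' * d.2) := by
    intro k k' hkk h
    exact hkk (param_inj hdne h)
  -- ex1
  have hex1T : ex1 P0 d m q ∈ Tset n q := by
    rw [Tset, Finset.mem_filter, mem_pairs, ex1]
    refine ⟨⟨(hgrid _).2 ⟨by omega, by omega⟩, (hgrid _).2 ⟨by omega, by omega⟩, ?_⟩, ?_⟩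
    · have e1 : (P0.1 + ((m:ℤ) - 1) * d.1) - (P0.1 + ((m:ℤ) - q) * d.1)
          = ((q:ℤ) - 1) * d.1 := by ring
      have e2 : (P0.2 + ((m:ℤ) - 1) * d.2) - (P0.2 + ((m:ℤ) - q) * d.2)
          = ((q:ℤ) - 1) * d.2 := by ring
      simp only [e1, e2]
      rw [gcdv_smul, hd1, mul_one]
      omega
    · have hdir : dirOf ((P0.1 + ((m:ℤ) - q) * d.1, P0.2 + ((m:ℤ) - q) * d.2),
          (P0.1 + ((m:ℤ) - 1) * d.1, P0.2 + ((m:ℤ) - 1) * d.2)) = d := by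
        rw [dirOf]
        simp only
        have e1 : (P0.1 + ((m:ℤ) - 1) * d.1) - (P0.1 + ((m:ℤ) - q) * d.1)
            = ((q:ℤ) - 1) * d.1 := by ring
        have e2 : (P0.2 + ((m:ℤ) - 1) * d.2) - (P0.2 + ((m:ℤ) - q) * d.2)
            = ((q:ℤ) - 1) * d.2 := by ring
        rw [e1, e2]
        exact prim_smul_pos hd1 (by omega)
      rw [extPt, hdir]
      simp only
      intro hc
      have : (P0.1 + (m:ℤ) * d.1, P0.2 + (m:ℤ) * d.2) ∈ grid n := by
        have e : (P0.1 + ((m:ℤ) - 1) * d.1 + d.1, P0.2 + ((m:ℤ) - 1) * d.2 + d.2)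
            = (P0.1 + (m:ℤ) * d.1, P0.2 + (m:ℤ) * d.2) := by
          rw [Prod.mk.injEq]; constructor <;> ring
        rwa [e] at hc
      rw [hgrid] at this
      omega
  have hex1L : lineThrough (emb (ex1 P0 d m q).1) (emb (ex1 P0 d m q).2)
      = lineThrough (emb A0) (emb B0) := by
    refine (line_eq_lineThrough hLline (hparam_mem _ (by omega) (by omega))
      (hparam_mem _ (by omega) (by omega)) ?_).symm
    intro h
    exact hpne _ _ (by omega : (m:ℤ) - q ≠ (m:ℤ) - 1) (emb_inj h)
  -- ex2
  have hP0g : P0 ∈ grid n := by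
    have := (hgrid 0).2 ⟨le_refl 0, by omega⟩
    simpa using this
  have hex2T : ex2 P0 d q ∈ Tset n q := by
    rw [Tset, Finset.mem_filter, mem_pairs, ex2]
    refine ⟨⟨(hgrid _).2 ⟨by omega, by omega⟩, hP0g, ?_⟩, ?_⟩
    · have e1 : P0.1 - (P0.1 + ((q:ℤ) - 1) * d.1) = (-((q:ℤ) - 1)) * d.1 := by ring
      have e2 : P0.2 - (P0.2 + ((q:ℤ) - 1) * d.2) = (-((q:ℤ) - 1)) * d.2 := by ring
      simp only [e1, e2]
      rw [gcdv_smul, hd1, mul_one]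
      omega
    · have hdir : dirOf ((P0.1 + ((q:ℤ) - 1) * d.1, P0.2 + ((q:ℤ) - 1) * d.2), P0)
          = (-d.1, -d.2) := by
        rw [dirOf]
        simp only
        have e1 : P0.1 - (P0.1 + ((q:ℤ) - 1) * d.1) = (-((q:ℤ) - 1)) * d.1 := by ring
        have e2 : P0.2 - (P0.2 + ((q:ℤ) - 1) * d.2) = (-((q:ℤ) - 1)) * d.2 := by ring
        rw [e1, e2]
        exact prim_smul_neg hd1 (by omega)
      rw [extPt, hdir]
      simp only
      intro hc
      have : (P0.1 + (-1 : ℤ) * d.1, P0.2 + (-1 : ℤ) * d.2) ∈ grid n := by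
        have e : (P0.1 + -d.1, P0.2 + -d.2)
            = (P0.1 + (-1 : ℤ) * d.1, P0.2 + (-1 : ℤ) * d.2) := by
          rw [Prod.mk.injEq]; constructor <;> ring
        rwa [e] at hc
      rw [hgrid] at this
      omega
  have hP0rep : ((P0.1 + (0:ℤ) * d.1, P0.2 + (0:ℤ) * d.2) : ℤ × ℤ) = P0 := by
    rw [Prod.ext_iff]; constructor <;> simp
  have hex2L : lineThrough (emb (ex2 P0 d q).1) (emb (ex2 P0 d q).2)
      = lineThrough (emb A0) (emb B0) := by
    refine (line_eq_lineThrough hLline (hparam_mem ((q:ℤ) - 1) (by omega) (by omega)) ?_ ?_).symm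
    · rw [ex2]
      have h0 := hparam_mem 0 (le_refl 0) (by omega)
      rwa [hP0rep] at h0
    · rw [ex2]
      simp only
      intro h
      exact hpne ((q:ℤ) - 1) 0 (by omega) ((emb_inj h).trans hP0rep.symm)
  refine ⟨⟨hex1T, hex1L⟩, ⟨hex2T, hex2L⟩, ?_⟩
  intro h
  have h2 := congrArg Prod.snd h
  rw [ex1, ex2] at h2
  simp only at h2
  have := param_inj hdne (h2.trans hP0rep.symm)
  omega

end Fiber

lemma tset_props {n q : ℕ} (hq : 2 ≤ q) {pq : (ℤ × ℤ) × (ℤ × ℤ)} (h : pq ∈ Tset n q) :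
    pq.1 ∈ grid n ∧ pq.2 ∈ grid n ∧ pq.1 ≠ pq.2 := by
  rw [Tset, Finset.mem_filter, mem_pairs] at h
  refine ⟨h.1.1, h.1.2.1, ?_⟩
  intro hc
  have h0 : gcdv (pq.2.1 - pq.1.1, pq.2.2 - pq.1.2) = 0 := by
    rw [hc]; simp [gcdv]
  have h22 := h.1.2.2
  omega


lemma card_Tset (n q : ℕ) (hq : 2 ≤ q) : (Tset n q).card = 2 * lineCountGe n q := by
  classical
  set Λ : ((ℤ × ℤ) × (ℤ × ℤ)) → Set (ℝ × ℝ) :=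
    fun pq => lineThrough (emb pq.1) (emb pq.2) with hΛ
  set I : Finset (Set (ℝ × ℝ)) := (Tset n q).image Λ with hI
  have hIset : ↑I = {L : Set (ℝ × ℝ) | IsLine L ∧ q ≤ (L ∩ gridPts n).ncard} := by
    ext L
    simp only [hI, Finset.coe_image, Set.mem_image, Finset.mem_coe, Set.mem_setOf_eq]
    constructor
    · rintro ⟨pq, hpq, rfl⟩
      obtain ⟨h1, h2, h3⟩ := tset_props hq hpq
      have hembne : emb pq.1 ≠ emb pq.2 := fun h => h3 (emb_inj h)
      obtain ⟨P0, d, m, hdne, hd1, hm2, hncard, hgrid, hmem⟩ := line_master h1 h2 h3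
      obtain ⟨hqm, _⟩ := fiber_forward hq hdne hd1 hgrid hmem hpq rfl
      exact ⟨isLine_lineThrough hembne, by rw [hΛ]; simp only; omega⟩
    · rintro ⟨hLl, hLq⟩
      -- find two distinct lattice points on L
      have hfin : (L ∩ gridPts n).Finite := by
        apply Set.Finite.inter_of_right
        rw [gridPts_eq]
        exact ((grid n).finite_toSet).image emb
      have h2card : 1 < (L ∩ gridPts n).ncard := by omega
      rw [Set.one_lt_ncard_iff hfin] at h2card
      obtain ⟨x, y, hx, hy, hxy⟩ := h2card
      obtain ⟨A0, hA0, rfl⟩ := by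
        have := hx.2; rw [gridPts_eq] at this; exact this
      obtain ⟨B0, hB0, rfl⟩ := by
        have := hy.2; rw [gridPts_eq] at this; exact this
      have hAB : A0 ≠ B0 := fun h => hxy (by rw [h])
      have hLeq : L = lineThrough (emb A0) (emb B0) :=
        line_eq_lineThrough hLl hx.1 hy.1 hxy
      obtain ⟨P0, d, m, hdne, hd1, hm2, hncard, hgrid, hmem⟩ :=
        line_master (Finset.mem_coe.1 hA0) (Finset.mem_coe.1 hB0) hAB
      have hqm : q ≤ m := by
        rw [hLeq] at hLq; omega
      obtain ⟨⟨hT1, hL1⟩, _, _⟩ := fiber_backward hq hqm hdne hd1 hAB hgrid hmem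
      exact ⟨ex1 P0 d m q, hT1, by rw [hΛ]; simp only; rw [hL1, hLeq]⟩
  have hfiber : ∀ L ∈ I, ((Tset n q).filter (fun pq => Λ pq = L)).card = 2 := by
    intro L hL
    rw [hI, Finset.mem_image] at hL
    obtain ⟨pq0, hpq0, rfl⟩ := hL
    obtain ⟨h1, h2, h3⟩ := tset_props hq hpq0
    obtain ⟨P0, d, m, hdne, hd1, hm2, hncard, hgrid, hmem⟩ := line_master h1 h2 h3
    obtain ⟨hqm, _⟩ := fiber_forward hq hdne hd1 hgrid hmem hpq0 rfl
    obtain ⟨⟨hT1, hL1⟩, ⟨hT2, hL2⟩, hne12⟩ := fiber_backward hq hqm hdne hd1 h3 hgrid hmem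
    have hfeq : (Tset n q).filter (fun pq => Λ pq = Λ pq0)
        = {ex1 P0 d m q, ex2 P0 d q} := by
      ext pq
      simp only [Finset.mem_filter, Finset.mem_insert, Finset.mem_singleton]
      constructor
      · rintro ⟨hpqT, hpqL⟩
        exact (fiber_forward hq hdne hd1 hgrid hmem hpqT hpqL).2
      · rintro (rfl | rfl)
        · exact ⟨hT1, hL1⟩
        · exact ⟨hT2, hL2⟩
    rw [hfeq, Finset.card_insert_of_notMem (by simpa using hne12), Finset.card_singleton]
  have hcount : (Tset n q).card = 2 * I.card := by
    rw [Finset.card_eq_sum_card_fiberwise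
      (fun pq hpq => Finset.mem_image_of_mem Λ hpq : ∀ pq ∈ Tset n q, Λ pq ∈ I)]
    rw [Finset.sum_congr rfl hfiber, Finset.sum_const, smul_eq_mul, mul_comm]
  have hlc : lineCountGe n q = I.card := by
    rw [lineCountGe, ← hIset, Set.ncard_coe_finset]
  rw [hcount, hlc]

end GridLines

/-- For `n ≥ 2`, `q ≥ 2`, the number of lines through at least `q`
gridpoints equals `(f_{q−1}(n) − f_q(n))/2`. -/
theorem lineCountGe_eq (n q : ℕ) (hn : 2 ≤ n) (hq : 2 ≤ q) :
    2 * (lineCountGe n q : ℤ) = fq (q - 1) n - fq q n := by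
  have h1 := GridLines.card_pairs n (q - 1)
  have h2 := GridLines.card_pairs n q
  have h3 := GridLines.card_pairs_split n q hq
  have h4 := GridLines.card_Tset n q hq
  rw [← h1, ← h2]
  push_cast [h3, h4]
  ring
end

section
/- For all integers n ≥ 2 and q ≥ 2, the number of lines passing through exactly q points of the n×n grid {0,…,n−1}² equals (1/2)·(f_{q+1}(n) − 2 f_q(n) + f_{q−1}(n)), where f_q(n) = Σ_{−n<i,j<n, gcd(i,j)=q} (n−|i|)(n−|j|). -/
open Finset Real Filter

-- auxiliary development
noncomputable def boxZ (n : ℕ) : Finset (ℤ × ℤ) := Finset.Ico 0 (n : ℤ) ×ˢ Finset.Ico 0 (n : ℤ)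

def toR (p : ℤ × ℤ) : ℝ × ℝ := ((p.1 : ℝ), (p.2 : ℝ))

lemma toR_inj : Function.Injective toR := by
  rintro ⟨a, b⟩ ⟨c, d⟩ h
  simp only [toR, Prod.mk.injEq] at h
  exact Prod.ext (by exact_mod_cast h.1) (by exact_mod_cast h.2)

lemma mem_gridPts {n : ℕ} {p : ℝ × ℝ} : p ∈ gridPts n ↔ ∃ R ∈ boxZ n, p = toR R := by
  constructor
  · rintro ⟨a, b, h1, h2, h3, h4, rfl⟩
    exact ⟨(a, b), by simp [boxZ, h1, h2, h3, h4], rfl⟩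
  · rintro ⟨⟨a, b⟩, hR, rfl⟩
    simp only [boxZ, Finset.mem_product, Finset.mem_Ico] at hR
    exact ⟨a, b, hR.1.1, hR.1.2, hR.2.1, hR.2.2, rfl⟩

lemma gridPts_eq (n : ℕ) : gridPts n = toR '' ↑(boxZ n) := by
  ext p; simp [mem_gridPts, Set.mem_image, eq_comm]

lemma gridPts_finite (n : ℕ) : (gridPts n).Finite := by
  rw [gridPts_eq]; exact ((boxZ n).finite_toSet).image _

/-- the line through two points, as the zero set of a determinant -/
def lineThrough (P Q : ℝ × ℝ) : Set (ℝ × ℝ) :=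
  {p | (Q.2 - P.2) * (p.1 - P.1) - (Q.1 - P.1) * (p.2 - P.2) = 0}

lemma isLine_lineThrough {P Q : ℝ × ℝ} (h : P ≠ Q) : IsLine (lineThrough P Q) := by
  refine ⟨Q.2 - P.2, P.1 - Q.1, Q.1 * P.2 - Q.2 * P.1, ?_, ?_⟩
  · intro hc
    rw [Prod.mk.injEq, sub_eq_zero, sub_eq_zero] at hc
    exact h (Prod.ext hc.2 hc.1.symm)
  · ext p
    simp only [lineThrough, Set.mem_setOf_eq]
    constructor <;> intro hp <;> linarith [hp]

lemma self_mem_lineThrough (P Q : ℝ × ℝ) : P ∈ lineThrough P Q := by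
  simp [lineThrough]

lemma right_mem_lineThrough (P Q : ℝ × ℝ) : Q ∈ lineThrough P Q := by
  simp only [lineThrough, Set.mem_setOf_eq]; ring

/-- uniqueness of the line through two distinct points -/
lemma line_eq_lineThrough {L : Set (ℝ × ℝ)} (hL : IsLine L) {P Q : ℝ × ℝ}
    (hP : P ∈ L) (hQ : Q ∈ L) (hne : P ≠ Q) : L = lineThrough P Q := by
  obtain ⟨a, b, c, hab, rfl⟩ := hL
  simp only [Set.mem_setOf_eq] at hP hQ
  have hD : Q.1 - P.1 ≠ 0 ∨ Q.2 - P.2 ≠ 0 := by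
    by_contra hc
    push_neg at hc
    obtain ⟨h1, h2⟩ := hc
    rw [sub_eq_zero] at h1 h2
    exact hne (Prod.ext h1.symm h2.symm)
  have key : ∃ t : ℝ, t ≠ 0 ∧ a = t * (Q.2 - P.2) ∧ b = t * (P.1 - Q.1) := by
    have hrel : a * (Q.1 - P.1) + b * (Q.2 - P.2) = 0 := by linarith
    rcases eq_or_ne (Q.2 - P.2) 0 with h2 | h2
    · have h1 : Q.1 - P.1 ≠ 0 := hD.resolve_right (by simp [h2])
      have ha : a = 0 := by
        have h3 := hrel; rw [h2, mul_zero, add_zero, mul_eq_zero] at h3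
        exact h3.resolve_right h1
      have hb : b ≠ 0 := by
        intro hb; exact hab (by simp [ha, hb, Prod.ext_iff])
      refine ⟨-b / (Q.1 - P.1), by simp [hb, h1], by simp [ha, h2], by field_simp; ring⟩
    · refine ⟨a / (Q.2 - P.2), ?_, by field_simp, ?_⟩
      · intro ht
        have ha : a = 0 := by
          field_simp at ht; simpa using ht
        have hb : b = 0 := by
          rw [ha] at hrel; simp at hrel
          rcases hrel with h | h
          · exact h
          · exact absurd h h2
        exact hab (by simp [ha, hb, Prod.ext_iff])
      · have : b * (Q.2 - P.2) = -(a * (Q.1 - P.1)) := by linarith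
        field_simp
        linarith [this]
  obtain ⟨t, ht, ha, hb⟩ := key
  ext p
  simp only [Set.mem_setOf_eq, lineThrough]
  have hexp : a * p.1 + b * p.2 + c =
      t * ((Q.2 - P.2) * (p.1 - P.1) - (Q.1 - P.1) * (p.2 - P.2)) := by
    rw [ha, hb] at hP ⊢
    linear_combination hP
  rw [hexp]
  constructor
  · intro h
    rcases mul_eq_zero.mp h with h | h
    · exact absurd h ht
    · exact h
  · intro h; rw [h, mul_zero]

/-- integer 2x2 determinant -/
def det2 (u v : ℤ × ℤ) : ℤ := u.1 * v.2 - u.2 * v.1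

/-- the real line through two integer points -/
def lineZ (P Q : ℤ × ℤ) : Set (ℝ × ℝ) := lineThrough (toR P) (toR Q)

lemma isLine_lineZ {P Q : ℤ × ℤ} (h : P ≠ Q) : IsLine (lineZ P Q) :=
  isLine_lineThrough (fun hc => h (toR_inj hc))

/-- lattice points of the grid on the line through P,Q -/
noncomputable def colSet (n : ℕ) (P Q : ℤ × ℤ) : Finset (ℤ × ℤ) :=
  (boxZ n).filter (fun R => det2 (R - P) (Q - P) = 0)

lemma toR_mem_lineZ_iff {P Q R : ℤ × ℤ} :
    toR R ∈ lineZ P Q ↔ det2 (R - P) (Q - P) = 0 := by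
  simp only [lineZ, lineThrough, toR, Set.mem_setOf_eq, det2, Prod.fst_sub, Prod.snd_sub]
  constructor
  · intro h
    have : ((R.1 - P.1) * (Q.2 - P.2) - (R.2 - P.2) * (Q.1 - P.1) : ℝ) = 0 := by
      linarith
    exact_mod_cast this
  · intro h
    have : ((R.1 - P.1) * (Q.2 - P.2) - (R.2 - P.2) * (Q.1 - P.1) : ℝ) = 0 := by
      exact_mod_cast h
    push_cast at this
    linarith

lemma mem_colSet_iff {n : ℕ} {P Q R : ℤ × ℤ} :
    R ∈ colSet n P Q ↔ R ∈ boxZ n ∧ toR R ∈ lineZ P Q := by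
  rw [colSet, Finset.mem_filter, toR_mem_lineZ_iff]

lemma lineZ_inter_grid (n : ℕ) (P Q : ℤ × ℤ) :
    lineZ P Q ∩ gridPts n = toR '' ↑(colSet n P Q) := by
  ext p
  constructor
  · rintro ⟨hp, hg⟩
    obtain ⟨R, hR, rfl⟩ := mem_gridPts.mp hg
    exact ⟨R, mem_colSet_iff.mpr ⟨hR, hp⟩, rfl⟩
  · rintro ⟨R, hR, rfl⟩
    rw [Finset.mem_coe, mem_colSet_iff] at hR
    exact ⟨hR.2, mem_gridPts.mpr ⟨R, hR.1, rfl⟩⟩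

lemma ncard_lineZ_inter (n : ℕ) (P Q : ℤ × ℤ) :
    (lineZ P Q ∩ gridPts n).ncard = (colSet n P Q).card := by
  rw [lineZ_inter_grid, Set.ncard_image_of_injective _ toR_inj, Set.ncard_coe_finset]

lemma self_mem_colSet {n : ℕ} {P Q : ℤ × ℤ} (hP : P ∈ boxZ n) : P ∈ colSet n P Q := by
  rw [mem_colSet_iff]
  exact ⟨hP, by rw [toR_mem_lineZ_iff]; simp [det2]⟩

lemma right_mem_colSet {n : ℕ} {P Q : ℤ × ℤ} (hQ : Q ∈ boxZ n) : Q ∈ colSet n P Q := by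
  rw [mem_colSet_iff]
  exact ⟨hQ, by rw [toR_mem_lineZ_iff]; simp [det2]; ring⟩

lemma count_Icc (a b : ℤ) (q : ℕ) (hq : 1 ≤ q) :
    (((Finset.Icc a b) ×ˢ (Finset.Icc a b)).filter
      (fun p => (p.1 - p.2).natAbs = q)).card = 2 * ((Finset.Icc a b).card - q) := by
  classical
  have habs : ∀ p : ℤ × ℤ, (p.1 - p.2).natAbs = q ↔ (p.1 - p.2 = q ∨ p.2 - p.1 = q) := by
    intro p; omega
  rw [Finset.filter_congr (fun p _ => by rw [habs p]), Finset.filter_or]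
  have hdisj : Disjoint
      (((Finset.Icc a b) ×ˢ (Finset.Icc a b)).filter (fun p => p.1 - p.2 = (q:ℤ)))
      (((Finset.Icc a b) ×ˢ (Finset.Icc a b)).filter (fun p => p.2 - p.1 = (q:ℤ))) := by
    rw [Finset.disjoint_left]
    intro p hp hp'
    simp only [Finset.mem_filter] at hp hp'
    omega
  rw [Finset.card_union_of_disjoint hdisj]
  have h1 : (((Finset.Icc a b) ×ˢ (Finset.Icc a b)).filter
      (fun p => p.1 - p.2 = (q:ℤ))).card = (Finset.Icc (a + q) b).card := by
    refine Finset.card_nbij' (fun p => p.1) (fun k => (k, k - (q:ℤ))) ?_ ?_ ?_ ?_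
    · intro p hp
      simp only [Finset.mem_coe, Finset.mem_filter, Finset.mem_product, Finset.mem_Icc] at hp ⊢
      omega
    · intro k hk
      simp only [Finset.mem_coe, Finset.mem_filter, Finset.mem_product, Finset.mem_Icc] at hk ⊢
      omega
    · intro p hp
      simp only [Finset.mem_coe, Finset.mem_filter, Finset.mem_product, Finset.mem_Icc] at hp
      have : p.1 - (q:ℤ) = p.2 := by omega
      exact Prod.ext rfl this
    · intro k hk; rfl
  have h2 : (((Finset.Icc a b) ×ˢ (Finset.Icc a b)).filter
      (fun p => p.2 - p.1 = (q:ℤ))).card = (Finset.Icc (a + q) b).card := by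
    refine Finset.card_nbij' (fun p => p.2) (fun k => (k - (q:ℤ), k)) ?_ ?_ ?_ ?_
    · intro p hp
      simp only [Finset.mem_coe, Finset.mem_filter, Finset.mem_product, Finset.mem_Icc] at hp ⊢
      omega
    · intro k hk
      simp only [Finset.mem_coe, Finset.mem_filter, Finset.mem_product, Finset.mem_Icc] at hk ⊢
      omega
    · intro p hp
      simp only [Finset.mem_coe, Finset.mem_filter, Finset.mem_product, Finset.mem_Icc] at hp
      have : p.2 - (q:ℤ) = p.1 := by omega
      exact Prod.ext this rfl
    · intro k hk; rfl
  rw [h1, h2, Int.card_Icc, Int.card_Icc]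
  omega

/-- interval betweenness for affine maps -/
lemma affine_between {x d k1 k k2 m : ℤ} (h1 : k1 ≤ k) (h2 : k ≤ k2)
    (lo1 : 0 ≤ x + k1 * d) (hi1 : x + k1 * d < m)
    (lo2 : 0 ≤ x + k2 * d) (hi2 : x + k2 * d < m) :
    0 ≤ x + k * d ∧ x + k * d < m := by
  rcases le_or_gt 0 d with hd | hd
  · have a1 := mul_le_mul_of_nonneg_right h1 hd
    have a2 := mul_le_mul_of_nonneg_right h2 hd
    constructor <;> linarith
  · have a1 := mul_le_mul_of_nonpos_right h1 (le_of_lt hd)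
    have a2 := mul_le_mul_of_nonpos_right h2 (le_of_lt hd)
    constructor <;> linarith

lemma mem_boxZ {n : ℕ} {R : ℤ × ℤ} :
    R ∈ boxZ n ↔ 0 ≤ R.1 ∧ R.1 < n ∧ 0 ≤ R.2 ∧ R.2 < n := by
  simp [boxZ, Finset.mem_product, Finset.mem_Ico, and_assoc]

/-- Core structure lemma: the pair count on a line. -/
lemma colSet_pair_count (n : ℕ) {P Q : ℤ × ℤ} (hP : P ∈ boxZ n) (hne : P ≠ Q)
    (q : ℕ) (hq : 1 ≤ q) :
    (((colSet n P Q) ×ˢ (colSet n P Q)).filter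
      (fun p => Int.gcd (p.1.1 - p.2.1) (p.1.2 - p.2.2) = q)).card
      = 2 * ((colSet n P Q).card - q) := by
  classical
  set D : ℤ × ℤ := Q - P with hD
  have hDne : D ≠ 0 := sub_ne_zero.mpr (Ne.symm hne)
  set g : ℕ := Int.gcd D.1 D.2 with hg
  have hgpos : 0 < g := by
    rw [hg, Int.gcd_pos_iff]
    by_contra hc
    push_neg at hc
    exact hDne (Prod.ext hc.1 hc.2)
  set d : ℤ × ℤ := (D.1 / g, D.2 / g) with hd
  have hd1 : D.1 = g * d.1 := by
    rw [hd, mul_comm]; exact (Int.ediv_mul_cancel (Int.gcd_dvd_left _ _)).symm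
  have hd2 : D.2 = g * d.2 := by
    rw [hd, mul_comm]; exact (Int.ediv_mul_cancel (Int.gcd_dvd_right _ _)).symm
  have hdgcd : Int.gcd d.1 d.2 = 1 := by
    rw [hd]
    exact Int.gcd_div_gcd_div_gcd hgpos
  clear hd
  clear_value d
  -- Bezout coefficients
  obtain ⟨u, v, huv⟩ : ∃ u v : ℤ, u * d.1 + v * d.2 = 1 := by
    refine ⟨Int.gcdA d.1 d.2, Int.gcdB d.1 d.2, ?_⟩
    have := Int.gcd_eq_gcd_ab d.1 d.2
    rw [hdgcd] at this
    push_cast at this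
    linarith [this]
  set κ : ℤ × ℤ → ℤ := fun R => u * (R.1 - P.1) + v * (R.2 - P.2) with hκ
  set e : ℤ → ℤ × ℤ := fun k => (P.1 + k * d.1, P.2 + k * d.2) with he
  have hdet : ∀ R ∈ colSet n P Q, (R.1 - P.1) * d.2 = (R.2 - P.2) * d.1 := by
    intro R hR
    rw [mem_colSet_iff] at hR
    have h0 : det2 (R - P) (Q - P) = 0 := (toR_mem_lineZ_iff).mp hR.2
    simp only [det2, Prod.fst_sub, Prod.snd_sub, ← hD] at h0
    rw [hd1, hd2] at h0
    have : (g : ℤ) * ((R.1 - P.1) * d.2 - (R.2 - P.2) * d.1) = 0 := by ring_nf; ring_nf at h0; linarith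
    have hgz : (g : ℤ) ≠ 0 := by exact_mod_cast hgpos.ne'
    have := mul_eq_zero.mp this
    rcases this with h | h
    · exact absurd h hgz
    · linarith
  have hrecon : ∀ R ∈ colSet n P Q, e (κ R) = R := by
    intro R hR
    have hdetR := hdet R hR
    have c1 : κ R * d.1 = R.1 - P.1 := by
      have : κ R * d.1 = u * ((R.1 - P.1) * d.1) + v * ((R.2 - P.2) * d.1) := by rw [hκ]; ring
      rw [← hdetR] at this
      rw [this]
      have : u * ((R.1 - P.1) * d.1) + v * ((R.1 - P.1) * d.2) = (R.1 - P.1) * (u * d.1 + v * d.2) := by ring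
      rw [this, huv, mul_one]
    have c2 : κ R * d.2 = R.2 - P.2 := by
      have h : κ R * d.2 = u * ((R.1 - P.1) * d.2) + v * ((R.2 - P.2) * d.2) := by rw [hκ]; ring
      rw [hdetR] at h
      rw [h]
      have : u * ((R.2 - P.2) * d.1) + v * ((R.2 - P.2) * d.2) = (R.2 - P.2) * (u * d.1 + v * d.2) := by ring
      rw [this, huv, mul_one]
    rw [he]
    exact Prod.ext (by dsimp; linarith) (by dsimp; linarith)
  have hκe : ∀ k : ℤ, κ (e k) = k := by
    intro k
    simp only [hκ, he]
    have : u * (P.1 + k * d.1 - P.1) + v * (P.2 + k * d.2 - P.2) = k * (u * d.1 + v * d.2) := by ring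
    rw [this, huv, mul_one]
  have heinj : Function.Injective e := by
    intro k l hkl
    have := congrArg κ hkl
    rwa [hκe, hκe] at this
  set K : Finset ℤ := (colSet n P Q).image κ with hK
  have hKe : colSet n P Q = K.image e := by
    ext R
    constructor
    · intro hR
      rw [Finset.mem_image]
      exact ⟨κ R, Finset.mem_image_of_mem _ hR, hrecon R hR⟩
    · intro hR
      rw [Finset.mem_image] at hR
      obtain ⟨k, hk, rfl⟩ := hR
      rw [hK, Finset.mem_image] at hk
      obtain ⟨S, hS, rfl⟩ := hk
      rwa [hrecon S hS]
  have hek_mem : ∀ k ∈ K, e k ∈ colSet n P Q := by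
    intro k hk
    rw [hKe]
    exact Finset.mem_image_of_mem _ hk
  have hKne : K.Nonempty := ⟨κ P, Finset.mem_image_of_mem _ (self_mem_colSet hP)⟩
  -- convexity of K
  have hconv : ∀ k1 ∈ K, ∀ k2 ∈ K, ∀ k : ℤ, k1 ≤ k → k ≤ k2 → k ∈ K := by
    intro k1 hk1 k2 hk2 k ha hb
    have h1 := hek_mem k1 hk1
    have h2 := hek_mem k2 hk2
    rw [mem_colSet_iff, mem_boxZ] at h1 h2
    have hbox : e k ∈ boxZ n := by
      rw [mem_boxZ]
      simp only [he] at h1 h2 ⊢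
      have c1 := affine_between (x := P.1) (d := d.1) (m := (n:ℤ)) ha hb
        h1.1.1 h1.1.2.1 h2.1.1 h2.1.2.1
      have c2 := affine_between (x := P.2) (d := d.2) (m := (n:ℤ)) ha hb
        h1.1.2.2.1 h1.1.2.2.2 h2.1.2.2.1 h2.1.2.2.2
      exact ⟨c1.1, c1.2, c2.1, c2.2⟩
    have honl : e k ∈ colSet n P Q := by
      rw [mem_colSet_iff]
      refine ⟨hbox, toR_mem_lineZ_iff.mpr ?_⟩
      simp only [det2, Prod.fst_sub, Prod.snd_sub, he, ← hD]
      have expand : (P.1 + k * d.1 - P.1) * D.2 - (P.2 + k * d.2 - P.2) * D.1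
          = k * (d.1 * D.2 - d.2 * D.1) := by ring
      rw [expand, hd1, hd2]; ring
    have : κ (e k) ∈ K := Finset.mem_image_of_mem _ honl
    rwa [hκe] at this
  have hKIcc : K = Finset.Icc (K.min' hKne) (K.max' hKne) := by
    ext k
    rw [Finset.mem_Icc]
    constructor
    · intro hk
      exact ⟨Finset.min'_le _ _ hk, Finset.le_max' _ _ hk⟩
    · rintro ⟨h1, h2⟩
      exact hconv _ (Finset.min'_mem _ _) _ (Finset.max'_mem _ _) k h1 h2
  have hcards : (colSet n P Q).card = K.card := by
    rw [hKe, Finset.card_image_of_injective _ heinj]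
  -- the gcd of differences of points on the line
  have hgcd_e : ∀ k l : ℤ, Int.gcd ((e k).1 - (e l).1) ((e k).2 - (e l).2) = (k - l).natAbs := by
    intro k l
    have e1 : (e k).1 - (e l).1 = (k - l) * d.1 := by simp only [he]; ring
    have e2 : (e k).2 - (e l).2 = (k - l) * d.2 := by simp only [he]; ring
    rw [e1, e2, Int.gcd_mul_left, hdgcd, mul_one]
  -- transfer the pair count to K
  have hbij : (((colSet n P Q) ×ˢ (colSet n P Q)).filter
      (fun p => Int.gcd (p.1.1 - p.2.1) (p.1.2 - p.2.2) = q)).card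
      = ((K ×ˢ K).filter (fun p => (p.1 - p.2).natAbs = q)).card := by
    refine Finset.card_nbij' (fun p => (κ p.1, κ p.2)) (fun p => (e p.1, e p.2)) ?_ ?_ ?_ ?_
    · intro p hp
      simp only [Finset.mem_coe, Finset.mem_filter, Finset.mem_product] at hp ⊢
      obtain ⟨⟨hp1, hp2⟩, hpg⟩ := hp
      refine ⟨⟨Finset.mem_image_of_mem _ hp1, Finset.mem_image_of_mem _ hp2⟩, ?_⟩
      have := hgcd_e (κ p.1) (κ p.2)
      rw [hrecon _ hp1, hrecon _ hp2] at this
      rw [← this, hpg]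
    · intro p hp
      simp only [Finset.mem_coe, Finset.mem_filter, Finset.mem_product] at hp ⊢
      obtain ⟨⟨hp1, hp2⟩, hpg⟩ := hp
      refine ⟨⟨hek_mem _ hp1, hek_mem _ hp2⟩, ?_⟩
      rw [hgcd_e, hpg]
    · intro p hp
      simp only [Finset.mem_coe, Finset.mem_filter, Finset.mem_product] at hp
      exact Prod.ext (hrecon _ hp.1.1) (hrecon _ hp.1.2)
    · intro p hp
      exact Prod.ext (hκe _) (hκe _)
  rw [hbij, hcards, hKIcc]
  exact count_Icc _ _ q hq

lemma fiber1_card (n : ℕ) (i : ℤ) :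
    (((Finset.Ico 0 (n:ℤ)) ×ˢ (Finset.Ico 0 (n:ℤ))).filter (fun p => p.1 - p.2 = i)).card
      = ((n:ℤ) - |i|).toNat := by
  classical
  have habs : |i| = (i.natAbs : ℤ) := Int.abs_eq_natAbs i
  have h : (((Finset.Ico 0 (n:ℤ)) ×ˢ (Finset.Ico 0 (n:ℤ))).filter (fun p => p.1 - p.2 = i)).card
      = (Finset.Ico (max 0 i) (min (n:ℤ) (n + i))).card := by
    refine Finset.card_nbij' (fun p => p.1) (fun k => (k, k - i)) ?_ ?_ ?_ ?_
    · intro p hp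
      dsimp only
      simp only [Finset.mem_coe, Finset.mem_filter, Finset.mem_product, Finset.mem_Ico] at hp ⊢
      omega
    · intro k hk
      dsimp only
      simp only [Finset.mem_coe, Finset.mem_filter, Finset.mem_product, Finset.mem_Ico] at hk ⊢
      omega
    · intro p hp
      dsimp only
      simp only [Finset.mem_coe, Finset.mem_filter, Finset.mem_product, Finset.mem_Ico] at hp
      exact Prod.ext rfl (by omega)
    · intro k hk; rfl
  rw [h, Int.card_Ico, habs]
  omega

lemma fiber2_card (n : ℕ) (i j : ℤ) :
    (((boxZ n) ×ˢ (boxZ n)).filter (fun p => p.1.1 - p.2.1 = i ∧ p.1.2 - p.2.2 = j)).card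
      = ((n:ℤ) - |i|).toNat * ((n:ℤ) - |j|).toNat := by
  classical
  rw [← fiber1_card n i, ← fiber1_card n j, ← Finset.card_product]
  refine Finset.card_nbij' (fun p => ((p.1.1, p.2.1), (p.1.2, p.2.2)))
    (fun p => ((p.1.1, p.2.1), (p.1.2, p.2.2))) ?_ ?_ ?_ ?_
  · intro p hp
    dsimp only
    simp only [Finset.mem_coe, Finset.mem_filter, Finset.mem_product, mem_boxZ, Finset.mem_Ico] at hp ⊢
    obtain ⟨⟨h1, h2⟩, h3, h4⟩ := hp
    exact ⟨⟨⟨⟨h1.1, h1.2.1⟩, h2.1, h2.2.1⟩, h3⟩, ⟨⟨h1.2.2.1, h1.2.2.2⟩, h2.2.2.1, h2.2.2.2⟩, h4⟩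
  · intro p hp
    dsimp only
    simp only [Finset.mem_coe, Finset.mem_filter, Finset.mem_product, Finset.mem_Ico, mem_boxZ] at hp ⊢
    obtain ⟨⟨⟨ha, hb⟩, h3⟩, ⟨hc, hd⟩, h4⟩ := hp
    exact ⟨⟨⟨ha.1, ha.2, hc.1, hc.2⟩, hb.1, hb.2, hd.1, hd.2⟩, h3, h4⟩
  · intro p hp; rfl
  · intro p hp; rfl

lemma fq_count (n q : ℕ) (_hq : 1 ≤ q) :
    fq q n = ((((boxZ n) ×ˢ (boxZ n)).filter
      (fun p => Int.gcd (p.1.1 - p.2.1) (p.1.2 - p.2.2) = q)).card : ℤ) := by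
  classical
  set T : Finset (ℤ × ℤ) :=
    ((Finset.Ioo (-(n:ℤ)) n) ×ˢ (Finset.Ioo (-(n:ℤ)) n)).filter
      (fun ij => Int.gcd ij.1 ij.2 = q) with hT
  have hcard : (((boxZ n) ×ˢ (boxZ n)).filter
      (fun p => Int.gcd (p.1.1 - p.2.1) (p.1.2 - p.2.2) = q)).card
      = ∑ ij ∈ T, ((n:ℤ) - |ij.1|).toNat * ((n:ℤ) - |ij.2|).toNat := by
    rw [Finset.card_eq_sum_card_fiberwise
      (f := fun p => (p.1.1 - p.2.1, p.1.2 - p.2.2)) (t := T) ?_]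
    · refine Finset.sum_congr rfl ?_
      intro ij hij
      rw [hT, Finset.mem_filter] at hij
      rw [← fiber2_card n ij.1 ij.2]
      congr 1
      ext p
      simp only [Finset.mem_filter, Prod.ext_iff]
      constructor
      · rintro ⟨⟨hp, _⟩, h1, h2⟩
        exact ⟨hp, h1, h2⟩
      · rintro ⟨hp, h1, h2⟩
        exact ⟨⟨hp, by rw [h1, h2]; exact hij.2⟩, h1, h2⟩
    · intro p hp
      dsimp only
      simp only [Finset.mem_coe, Finset.mem_filter, Finset.mem_product, mem_boxZ] at hp
      rw [hT, Finset.mem_coe, Finset.mem_filter, Finset.mem_product, Finset.mem_Ioo, Finset.mem_Ioo]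
      obtain ⟨⟨h1, h2⟩, h3⟩ := hp
      exact ⟨⟨⟨by omega, by omega⟩, by omega, by omega⟩, h3⟩
  rw [hcard]
  rw [fq, ← Finset.sum_product']
  rw [← Finset.sum_filter, ← hT]
  push_cast
  refine Finset.sum_congr rfl ?_
  intro ij hij
  rw [hT, Finset.mem_filter, Finset.mem_product, Finset.mem_Ioo, Finset.mem_Ioo] at hij
  obtain ⟨⟨⟨ha1, ha2⟩, hb1, hb2⟩, -⟩ := hij
  have h1 : (0:ℤ) ≤ (n:ℤ) - |ij.1| := by
    rw [Int.abs_eq_natAbs]; omega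
  have h2 : (0:ℤ) ≤ (n:ℤ) - |ij.2| := by
    rw [Int.abs_eq_natAbs]; omega
  rw [Int.toNat_of_nonneg h1, Int.toNat_of_nonneg h2]

open scoped Classical in
noncomputable def LinesFinset (n : ℕ) : Finset (Set (ℝ × ℝ)) :=
  (((boxZ n) ×ˢ (boxZ n)).filter (fun p => p.1 ≠ p.2)).image (fun p => lineZ p.1 p.2)

lemma mem_LinesFinset {n : ℕ} {L : Set (ℝ × ℝ)} :
    L ∈ LinesFinset n ↔ ∃ P Q : ℤ × ℤ, P ∈ boxZ n ∧ Q ∈ boxZ n ∧ P ≠ Q ∧ L = lineZ P Q := by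
  classical
  simp only [LinesFinset, Finset.mem_image, Finset.mem_filter, Finset.mem_product]
  constructor
  · rintro ⟨⟨P, Q⟩, ⟨⟨h1, h2⟩, h3⟩, rfl⟩
    exact ⟨P, Q, h1, h2, h3, rfl⟩
  · rintro ⟨P, Q, h1, h2, h3, rfl⟩
    exact ⟨(P, Q), ⟨⟨h1, h2⟩, h3⟩, rfl⟩

lemma toR_self_mem_lineZ (P Q : ℤ × ℤ) : toR P ∈ lineZ P Q := self_mem_lineThrough _ _
lemma toR_right_mem_lineZ (P Q : ℤ × ℤ) : toR Q ∈ lineZ P Q := right_mem_lineThrough _ _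

lemma lineZ_eq_of_mem {L : Set (ℝ × ℝ)} (hL : IsLine L) {R S : ℤ × ℤ}
    (hR : toR R ∈ L) (hS : toR S ∈ L) (hne : R ≠ S) : lineZ R S = L :=
  (line_eq_lineThrough hL hR hS (fun h => hne (toR_inj h))).symm

lemma gcd_filtered_card (n q : ℕ) (hq : 1 ≤ q) :
    (((boxZ n) ×ˢ (boxZ n)).filter
      (fun p => Int.gcd (p.1.1 - p.2.1) (p.1.2 - p.2.2) = q)).card
    = ∑ L ∈ LinesFinset n, 2 * ((L ∩ gridPts n).ncard - q) := by
  classical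
  rw [Finset.card_eq_sum_card_fiberwise (f := fun p => lineZ p.1 p.2) (t := LinesFinset n) ?_]
  · refine Finset.sum_congr rfl ?_
    intro L hL
    obtain ⟨P₀, Q₀, hP₀, hQ₀, hne₀, rfl⟩ := mem_LinesFinset.mp hL
    have hIsLine : IsLine (lineZ P₀ Q₀) := isLine_lineZ hne₀
    rw [ncard_lineZ_inter]
    rw [← colSet_pair_count n hP₀ hne₀ q hq]
    congr 1
    ext p
    simp only [Finset.mem_filter, Finset.mem_product]
    constructor
    · rintro ⟨⟨⟨hb1, hb2⟩, hg⟩, hl⟩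
      refine ⟨⟨?_, ?_⟩, hg⟩
      · rw [mem_colSet_iff]
        exact ⟨hb1, hl ▸ toR_self_mem_lineZ p.1 p.2⟩
      · rw [mem_colSet_iff]
        exact ⟨hb2, hl ▸ toR_right_mem_lineZ p.1 p.2⟩
    · rintro ⟨⟨hc1, hc2⟩, hg⟩
      rw [mem_colSet_iff] at hc1 hc2
      have hne : p.1 ≠ p.2 := by
        intro h
        rw [h] at hg
        simp at hg
        omega
      exact ⟨⟨⟨hc1.1, hc2.1⟩, hg⟩, lineZ_eq_of_mem hIsLine hc1.2 hc2.2 hne⟩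
  · intro p hp
    simp only [Finset.mem_coe, Finset.mem_filter, Finset.mem_product] at hp
    have hne : p.1 ≠ p.2 := by
      intro h
      rw [h] at hp
      simp at hp
      omega
    exact mem_LinesFinset.mpr ⟨p.1, p.2, hp.1.1, hp.1.2, hne, rfl⟩

lemma lineCountEq_eq_card (n q : ℕ) (hq : 2 ≤ q) :
    lineCountEq n q = ((LinesFinset n).filter
      (fun L => (L ∩ gridPts n).ncard = q)).card := by
  classical
  rw [lineCountEq, ← Set.ncard_coe_finset]
  congr 1
  ext L
  simp only [Set.mem_setOf_eq, Finset.coe_filter, Finset.mem_coe]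
  constructor
  · rintro ⟨hL, hc⟩
    refine ⟨?_, hc⟩
    have hfin : (L ∩ gridPts n).Finite :=
      Set.Finite.subset (gridPts_finite n) Set.inter_subset_right
    have h2 : 1 < (L ∩ gridPts n).ncard := by omega
    obtain ⟨a, b, ha, hb, hab⟩ := (Set.one_lt_ncard_iff hfin).mp h2
    obtain ⟨R, hR, rfl⟩ := mem_gridPts.mp ha.2
    obtain ⟨S, hS, rfl⟩ := mem_gridPts.mp hb.2
    have hRS : R ≠ S := fun h => hab (by rw [h])
    exact mem_LinesFinset.mpr ⟨R, S, hR, hS, hRS,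
      (lineZ_eq_of_mem hL ha.1 hb.1 hRS).symm⟩
  · rintro ⟨hL, hc⟩
    obtain ⟨P, Q, _, _, hne, rfl⟩ := mem_LinesFinset.mp hL
    exact ⟨isLine_lineZ hne, hc⟩


/-- For `n ≥ 2`, `q ≥ 2`, the number of lines through exactly `q`
gridpoints equals `(f_{q+1}(n) − 2f_q(n) + f_{q−1}(n))/2`. -/
theorem lineCountEq_eq (n q : ℕ) (hn : 2 ≤ n) (hq : 2 ≤ q) :
    2 * (lineCountEq n q : ℤ) = fq (q + 1) n - 2 * fq q n + fq (q - 1) n := by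
  classical
  have hf : ∀ r : ℕ, 1 ≤ r →
      fq r n = ∑ L ∈ LinesFinset n, ((2 * ((L ∩ gridPts n).ncard - r) : ℕ) : ℤ) := by
    intro r hr
    rw [fq_count n r hr, gcd_filtered_card n r hr]
    push_cast
    rfl
  rw [hf (q + 1) (by omega), hf q (by omega), hf (q - 1) (by omega)]
  have hl : (lineCountEq n q : ℤ)
      = ∑ L ∈ LinesFinset n, (if (L ∩ gridPts n).ncard = q then (1 : ℤ) else 0) := by
    rw [lineCountEq_eq_card n q hq]
    push_cast [Finset.card_filter]
    rfl
  rw [hl, Finset.mul_sum, Finset.mul_sum, ← Finset.sum_sub_distrib, ← Finset.sum_add_distrib]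
  refine Finset.sum_congr rfl ?_
  intro L _
  set m := (L ∩ gridPts n).ncard with hm
  split_ifs with h
  · subst h
    omega
  · omega
end

section
/- For all integers n ≥ 1 and q ≥ 1, f_q(n+1) = 8 · Σ_{i=1}^{⌊n/q⌋} (n+1−qi)(n+1−(q/2)i)·φ(i), where φ is Euler's totient function and f_q(n) = Σ_{−n<i,j<n, gcd(i,j)=q} (n−|i|)(n−|j|). -/
open Finset Real Filter

private lemma card_coprime_Icc' (a : ℕ) :
    ({b ∈ Finset.Icc 1 a | Nat.gcd a b = 1}).card = a.totient := by
  have h := Nat.filter_coprime_Ico_eq_totient a 1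
  rw [← h]
  apply congr_arg
  ext b
  simp only [Finset.mem_filter, Finset.mem_Icc, Finset.mem_Ico, Nat.Coprime]
  constructor <;> rintro ⟨h1, h2⟩ <;> exact ⟨by omega, h2⟩

private lemma sum_coprime_Icc (a : ℕ) (ha : 1 ≤ a) :
    2 * ∑ b ∈ {b ∈ Finset.Icc 1 a | Nat.gcd a b = 1}, (b : ℚ)
      = a * a.totient + (if a = 1 then 1 else 0) := by
  rcases eq_or_lt_of_le ha with h1 | h2
  · subst h1
    norm_num [Finset.Icc_self, Finset.filter_singleton]
  · -- a ≥ 2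
    have key : ∑ b ∈ {b ∈ Finset.Icc 1 a | Nat.gcd a b = 1}, (b : ℚ)
        = ∑ b ∈ {b ∈ Finset.Icc 1 a | Nat.gcd a b = 1}, ((a : ℚ) - b) := by
      apply Finset.sum_nbij' (fun b => a - b) (fun b => a - b)
      all_goals intro b hb
      · simp only [mem_filter, mem_Icc] at hb ⊢
        have hba : b ≤ a := hb.1.2
        have hbne : b ≠ a := by
          rintro rfl
          rw [Nat.gcd_self] at hb; omega
        have hg : Nat.gcd a (a - b) = 1 := by
          rw [Nat.gcd_self_sub_right hba]; exact hb.2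
        refine ⟨⟨by omega, by omega⟩, ?_⟩
        first
        | exact hg
        | (rw [Nat.gcd_comm]; exact hg)
      · simp only [mem_filter, mem_Icc] at hb ⊢
        have hba : b ≤ a := hb.1.2
        have hbne : b ≠ a := by
          rintro rfl
          rw [Nat.gcd_self] at hb; omega
        have hg : Nat.gcd a (a - b) = 1 := by
          rw [Nat.gcd_self_sub_right hba]; exact hb.2
        refine ⟨⟨by omega, by omega⟩, ?_⟩
        first
        | exact hg
        | (rw [Nat.gcd_comm]; exact hg)
      · simp only [mem_filter, mem_Icc] at hb; omega
      · simp only [mem_filter, mem_Icc] at hb; omega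
      · simp only [mem_filter, mem_Icc] at hb
        push_cast [hb.1.2]
        ring
    have hsum : ∑ b ∈ {b ∈ Finset.Icc 1 a | Nat.gcd a b = 1}, ((a : ℚ) - b)
        = a * a.totient - ∑ b ∈ {b ∈ Finset.Icc 1 a | Nat.gcd a b = 1}, (b : ℚ) := by
      rw [Finset.sum_sub_distrib, Finset.sum_const, card_coprime_Icc' a]
      ring
    rw [if_neg (by omega)]
    rw [hsum] at key
    linarith

private lemma fqInnerSum (C D : ℚ) (a : ℕ) (ha : 1 ≤ a) :
    ∑ b ∈ {b ∈ Finset.Icc 1 a | Nat.gcd a b = 1}, (C - D * b)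
      = (a.totient : ℚ) * (C - D * a / 2) - (if a = 1 then D / 2 else 0) := by
  rw [Finset.sum_sub_distrib, Finset.sum_const, ← Finset.mul_sum, card_coprime_Icc' a,
    nsmul_eq_mul]
  have h2 := sum_coprime_Icc a ha
  have hS : ∑ b ∈ {b ∈ Finset.Icc 1 a | Nat.gcd a b = 1}, (b : ℚ)
      = ((a : ℚ) * a.totient + (if a = 1 then 1 else 0)) / 2 := by linarith
  rw [hS]
  split_ifs with h
  · subst h; push_cast [Nat.totient_one]; ring
  · ring

private lemma sum_mul_subst (q n : ℕ) (hq : 1 ≤ q) (F : ℕ → ℚ)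
    (hF : ∀ j ∈ Finset.Icc 1 n, ¬ q ∣ j → F j = 0) :
    ∑ j ∈ Finset.Icc 1 n, F j = ∑ b ∈ Finset.Icc 1 (n / q), F (q * b) := by
  have himg : Finset.image (fun b => q * b) (Finset.Icc 1 (n / q)) ⊆ Finset.Icc 1 n := by
    intro j hj
    simp only [Finset.mem_image, Finset.mem_Icc] at hj ⊢
    obtain ⟨b, ⟨hb1, hb2⟩, rfl⟩ := hj
    constructor
    · exact Nat.one_le_iff_ne_zero.mpr (by positivity)
    · calc q * b ≤ q * (n / q) := by exact Nat.mul_le_mul_left q hb2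
        _ ≤ n := Nat.mul_div_le n q
  have hinj : Set.InjOn (fun b => q * b) (Finset.Icc 1 (n / q)) := by
    intro x _ y _ h
    simpa using Nat.eq_of_mul_eq_mul_left (by omega) h
  rw [← Finset.sum_image hinj]
  symm
  apply Finset.sum_subset himg
  intro j hj hjn
  by_cases hdvd : q ∣ j
  · exfalso
    obtain ⟨b, rfl⟩ := hdvd
    apply hjn
    simp only [Finset.mem_Icc] at hj
    simp only [Finset.mem_image, Finset.mem_Icc]
    have hb1 : 1 ≤ b := by
      rcases Nat.eq_zero_or_pos b with rfl | h
      · omega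
      · exact h
    have hb2 : b ≤ n / q := by
      apply (Nat.le_div_iff_mul_le (by omega)).mpr
      rw [Nat.mul_comm]
      exact hj.2
    exact ⟨b, ⟨hb1, hb2⟩, rfl⟩
  · exact hF j hj hdvd

private lemma even_split (n : ℕ) (t : ℤ → ℚ) (ht : ∀ i, t (-i) = t i) :
    ∑ i ∈ Finset.Ioo (-((n : ℤ) + 1)) ((n : ℤ) + 1), t i
      = t 0 + 2 * ∑ a ∈ Finset.Icc 1 n, t (a : ℤ) := by
  have h1 : Finset.Ioo (-((n : ℤ) + 1)) ((n : ℤ) + 1)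
      = Finset.Icc (-(n : ℤ)) (-1) ∪ Finset.Icc 0 (n : ℤ) := by
    ext i
    simp only [Finset.mem_Ioo, Finset.mem_union, Finset.mem_Icc]
    omega
  have hdisj : Disjoint (Finset.Icc (-(n : ℤ)) (-1)) (Finset.Icc 0 (n : ℤ)) := by
    rw [Finset.disjoint_left]
    intro i hi hi'
    simp only [Finset.mem_Icc] at hi hi'
    omega
  rw [h1, Finset.sum_union hdisj]
  have hnat : ∑ i ∈ Finset.Icc (1 : ℤ) (n : ℤ), t i = ∑ a ∈ Finset.Icc 1 n, t (a : ℤ) := by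
    refine Finset.sum_nbij' (fun i => i.toNat) (fun a : ℕ => (a : ℤ)) ?_ ?_ ?_ ?_ ?_
    · intro i hi; simp only [Finset.mem_Icc] at hi ⊢; omega
    · intro a ha; simp only [Finset.mem_Icc] at ha ⊢; omega
    · intro i hi; simp only [Finset.mem_Icc] at hi
      exact Int.toNat_of_nonneg (by omega)
    · intro a _; simp
    · intro i hi; simp only [Finset.mem_Icc] at hi
      congr 1
      exact (Int.toNat_of_nonneg (by omega)).symm
  have hneg : ∑ i ∈ Finset.Icc (-(n : ℤ)) (-1), t i = ∑ i ∈ Finset.Icc (1 : ℤ) (n : ℤ), t i := by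
    apply Finset.sum_nbij' (fun i => -i) (fun i => -i)
    · intro i hi; simp only [Finset.mem_Icc] at hi ⊢; omega
    · intro i hi; simp only [Finset.mem_Icc] at hi ⊢; omega
    · intro i _; ring
    · intro i _; ring
    · intro i _; rw [← ht i]
  have h0 : Finset.Icc (0 : ℤ) (n : ℤ) = insert 0 (Finset.Icc 1 (n : ℤ)) := by
    ext i
    simp only [Finset.mem_Icc, Finset.mem_insert]
    omega
  rw [hneg, hnat, h0, Finset.sum_insert (by simp), hnat]
  ring

private lemma even_split2 (n : ℕ) (t : ℤ → ℤ → ℚ)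
    (ht1 : ∀ i j, t (-i) j = t i j) (ht2 : ∀ i j, t i (-j) = t i j) :
    ∑ i ∈ Finset.Ioo (-((n : ℤ) + 1)) ((n : ℤ) + 1),
      ∑ j ∈ Finset.Ioo (-((n : ℤ) + 1)) ((n : ℤ) + 1), t i j
      = t 0 0 + 2 * ∑ b ∈ Finset.Icc 1 n, t 0 (b : ℤ)
        + 2 * ∑ a ∈ Finset.Icc 1 n, t (a : ℤ) 0
        + 4 * ∑ a ∈ Finset.Icc 1 n, ∑ b ∈ Finset.Icc 1 n, t (a : ℤ) (b : ℤ) := by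
  rw [even_split n (fun i => ∑ j ∈ Finset.Ioo (-((n : ℤ) + 1)) ((n : ℤ) + 1), t i j)
    (fun i => Finset.sum_congr rfl fun j _ => ht1 i j)]
  rw [even_split n (t 0) (ht2 0)]
  have hrow : ∀ a ∈ Finset.Icc 1 n,
      ∑ j ∈ Finset.Ioo (-((n : ℤ) + 1)) ((n : ℤ) + 1), t (a : ℤ) j
        = t (a : ℤ) 0 + 2 * ∑ b ∈ Finset.Icc 1 n, t (a : ℤ) (b : ℤ) :=
    fun a _ => even_split n (t (a : ℤ)) (ht2 (a : ℤ))
  rw [Finset.sum_congr rfl hrow, Finset.sum_add_distrib, ← Finset.mul_sum]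
  ring

private lemma sym_split (M : ℕ) (s : ℕ → ℕ → ℚ) (hs : ∀ a b, s a b = s b a) :
    ∑ a ∈ Finset.Icc 1 M, ∑ b ∈ Finset.Icc 1 M, s a b
      = 2 * (∑ a ∈ Finset.Icc 1 M, ∑ b ∈ Finset.Icc 1 a, s a b)
        - ∑ a ∈ Finset.Icc 1 M, s a a := by
  have htri : ∀ a ∈ Finset.Icc 1 M, ∑ b ∈ Finset.Icc 1 M, s a b
      = (∑ b ∈ Finset.Icc 1 M, if b < a then s a b else 0)
        + (∑ b ∈ Finset.Icc 1 M, if b = a then s a b else 0)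
        + (∑ b ∈ Finset.Icc 1 M, if a < b then s a b else 0) := by
    intro a _
    rw [← Finset.sum_add_distrib, ← Finset.sum_add_distrib]
    apply Finset.sum_congr rfl
    intro b _
    rcases lt_trichotomy b a with h | h | h
    · rw [if_pos h, if_neg (by omega), if_neg (by omega)]; ring
    · rw [if_neg (by omega), if_pos h, if_neg (by omega)]; ring
    · rw [if_neg (by omega), if_neg (by omega), if_pos h]; ring
  have hdiag : ∀ a ∈ Finset.Icc 1 M,
      (∑ b ∈ Finset.Icc 1 M, if b = a then s a b else 0) = s a a := by
    intro a ha
    rw [Finset.sum_ite_eq' (Finset.Icc 1 M) a (fun b => s a b), if_pos ha]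
  have hswap : ∑ a ∈ Finset.Icc 1 M, ∑ b ∈ Finset.Icc 1 M, (if a < b then s a b else 0)
      = ∑ a ∈ Finset.Icc 1 M, ∑ b ∈ Finset.Icc 1 M, (if b < a then s a b else 0) := by
    rw [Finset.sum_comm]
    apply Finset.sum_congr rfl
    intro a _
    apply Finset.sum_congr rfl
    intro b _
    split_ifs with h
    · exact hs b a
    · rfl
  have hlow : ∀ a ∈ Finset.Icc 1 M, ∑ b ∈ Finset.Icc 1 a, s a b
      = (∑ b ∈ Finset.Icc 1 M, if b < a then s a b else 0) + s a a := by
    intro a ha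
    simp only [Finset.mem_Icc] at ha
    rw [← Finset.sum_filter]
    have hins : Finset.Icc 1 a = insert a ({b ∈ Finset.Icc 1 M | b < a}) := by
      ext b
      simp only [Finset.mem_Icc, Finset.mem_insert, Finset.mem_filter]
      omega
    rw [hins, Finset.sum_insert (by simp)]
    ring
  rw [Finset.sum_congr rfl htri, Finset.sum_add_distrib, Finset.sum_add_distrib,
    Finset.sum_congr rfl hdiag, hswap, Finset.sum_congr rfl hlow, Finset.sum_add_distrib]
  ring

/-- `f_q(n+1) = 8 Σ_{i=1}^{⌊n/q⌋} (n+1−qi)(n+1−(q/2)i)φ(i)`. -/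
theorem fq_succ_totient (n q : ℕ) (hn : 1 ≤ n) (hq : 1 ≤ q) :
    (fq q (n + 1) : ℚ) = 8 * ∑ i ∈ Finset.Icc 1 (n / q),
      ((n : ℚ) + 1 - (q : ℚ) * (i : ℚ)) * ((n : ℚ) + 1 - (q : ℚ) / 2 * (i : ℚ)) *
        (Nat.totient i : ℚ) := by
  classical
  have hq0 : 0 < q := hq
  have step1 : (fq q (n + 1) : ℚ)
      = ∑ i ∈ Finset.Ioo (-((n:ℤ)+1)) ((n:ℤ)+1), ∑ j ∈ Finset.Ioo (-((n:ℤ)+1)) ((n:ℤ)+1),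
          (if Int.gcd i j = q then (((n:ℚ)+1) - |(i:ℚ)|) * (((n:ℚ)+1) - |(j:ℚ)|) else 0) := by
    rw [fq]
    push_cast [apply_ite (fun z : ℤ => (z : ℚ))]
    rfl
  have step2 := even_split2 n
      (fun i j => if Int.gcd i j = q then (((n:ℚ)+1) - |(i:ℚ)|) * (((n:ℚ)+1) - |(j:ℚ)|) else 0)
      (by intro i j; push_cast [Int.neg_gcd, abs_neg]; try rfl)
      (by intro i j; push_cast [Int.gcd_neg, abs_neg]; try rfl)
  refine (step1.trans (step2.trans ?_))
  beta_reduce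
  -- Step 3: compute the corner term
  have h00 : (if Int.gcd 0 0 = q then (((n:ℚ)+1) - |((0:ℤ):ℚ)|) * (((n:ℚ)+1) - |((0:ℤ):ℚ)|) else 0) = 0 := by
    rw [if_neg]
    rw [show Int.gcd 0 0 = 0 from rfl]
    omega
  -- Step 4: the two axis sums
  have habs : ∀ b : ℕ, |((b:ℤ):ℚ)| = (b:ℚ) := by
    intro b; push_cast; exact abs_of_nonneg (by positivity)
  have habs0 : |((0:ℤ):ℚ)| = 0 := by simp
  have hrow0 : (∑ b ∈ Finset.Icc 1 n, if Int.gcd 0 (b:ℤ) = q then (((n:ℚ)+1) - |((0:ℤ):ℚ)|) * (((n:ℚ)+1) - |((b:ℤ):ℚ)|) else 0)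
      = if q ∈ Finset.Icc 1 n then (((n:ℚ)+1)) * (((n:ℚ)+1) - (q:ℚ)) else 0 := by
    have e1 : ∀ b ∈ Finset.Icc 1 n,
        (if Int.gcd 0 (b:ℤ) = q then (((n:ℚ)+1) - |((0:ℤ):ℚ)|) * (((n:ℚ)+1) - |((b:ℤ):ℚ)|) else 0)
          = (if b = q then (((n:ℚ)+1)) * (((n:ℚ)+1) - (b:ℚ)) else 0) := by
      intro b _
      have hg : Int.gcd 0 (b:ℤ) = b := by simp [Int.gcd]
      rw [hg, habs0, habs b, sub_zero]
    rw [Finset.sum_congr rfl e1,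
      Finset.sum_ite_eq' (Finset.Icc 1 n) q (fun b => (((n:ℚ)+1)) * (((n:ℚ)+1) - (b:ℚ)))]
  have hcol0 : (∑ a ∈ Finset.Icc 1 n, if Int.gcd (a:ℤ) 0 = q then (((n:ℚ)+1) - |((a:ℤ):ℚ)|) * (((n:ℚ)+1) - |((0:ℤ):ℚ)|) else 0)
      = if q ∈ Finset.Icc 1 n then (((n:ℚ)+1) - (q:ℚ)) * ((n:ℚ)+1) else 0 := by
    have e1 : ∀ a ∈ Finset.Icc 1 n,
        (if Int.gcd (a:ℤ) 0 = q then (((n:ℚ)+1) - |((a:ℤ):ℚ)|) * (((n:ℚ)+1) - |((0:ℤ):ℚ)|) else 0)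
          = (if a = q then (((n:ℚ)+1) - (a:ℚ)) * ((n:ℚ)+1) else 0) := by
      intro a _
      have hg : Int.gcd (a:ℤ) 0 = a := by simp [Int.gcd]
      rw [hg, habs0, habs a, sub_zero]
    rw [Finset.sum_congr rfl e1,
      Finset.sum_ite_eq' (Finset.Icc 1 n) q (fun a => (((n:ℚ)+1) - (a:ℚ)) * ((n:ℚ)+1))]
  -- Step 5: convert the double sum to a ℕ-indexed sum
  have hmain : (∑ a ∈ Finset.Icc 1 n, ∑ b ∈ Finset.Icc 1 n,
        if Int.gcd (a:ℤ) (b:ℤ) = q then (((n:ℚ)+1) - |((a:ℤ):ℚ)|) * (((n:ℚ)+1) - |((b:ℤ):ℚ)|) else 0)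
      = ∑ a ∈ Finset.Icc 1 n, ∑ b ∈ Finset.Icc 1 n,
          (if Nat.gcd a b = q then (((n:ℚ)+1) - (a:ℚ)) * (((n:ℚ)+1) - (b:ℚ)) else 0) := by
    apply Finset.sum_congr rfl
    intro a _
    apply Finset.sum_congr rfl
    intro b _
    rw [Int.gcd_natCast_natCast, habs a, habs b]
  -- Step 6: substitute multiples of q
  have houter : ∀ i ∈ Finset.Icc 1 n, ¬ q ∣ i →
      (∑ b ∈ Finset.Icc 1 n, (if Nat.gcd i b = q then (((n:ℚ)+1) - (i:ℚ)) * (((n:ℚ)+1) - (b:ℚ)) else 0)) = 0 := by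
    intro i _ hdvd
    apply Finset.sum_eq_zero
    intro b _
    rw [if_neg]
    intro h
    exact hdvd (h ▸ Nat.gcd_dvd_left i b)
  have hsub : (∑ a ∈ Finset.Icc 1 n, ∑ b ∈ Finset.Icc 1 n,
        (if Nat.gcd a b = q then (((n:ℚ)+1) - (a:ℚ)) * (((n:ℚ)+1) - (b:ℚ)) else 0))
      = ∑ a ∈ Finset.Icc 1 (n/q), ∑ b ∈ Finset.Icc 1 (n/q),
          (if Nat.gcd a b = 1 then (((n:ℚ)+1) - (q:ℚ)*(a:ℚ)) * (((n:ℚ)+1) - (q:ℚ)*(b:ℚ)) else 0) := by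
    rw [sum_mul_subst q n hq _ houter]
    apply Finset.sum_congr rfl
    intro a _
    have hinner : ∀ b ∈ Finset.Icc 1 n, ¬ q ∣ b →
        (if Nat.gcd (q*a) b = q then (((n:ℚ)+1) - ((q*a : ℕ):ℚ)) * (((n:ℚ)+1) - (b:ℚ)) else 0) = 0 := by
      intro b _ hdvd
      rw [if_neg]
      intro h
      exact hdvd (h ▸ Nat.gcd_dvd_right (q*a) b)
    rw [sum_mul_subst q n hq _ hinner]
    apply Finset.sum_congr rfl
    intro b _
    have hcond : (Nat.gcd (q*a) (q*b) = q) ↔ Nat.gcd a b = 1 := by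
      rw [Nat.gcd_mul_left]
      constructor
      · intro h
        exact Nat.eq_of_mul_eq_mul_left hq0 (h.trans (Nat.mul_one q).symm)
      · intro h; rw [h, Nat.mul_one]
    by_cases h : Nat.gcd a b = 1
    · rw [if_pos (hcond.mpr h), if_pos h]; push_cast; ring
    · rw [if_neg (fun hh => h (hcond.mp hh)), if_neg h]
  -- Step 7: symmetric split
  have hsym := sym_split (n/q)
      (fun a b => if Nat.gcd a b = 1 then (((n:ℚ)+1) - (q:ℚ)*(a:ℚ)) * (((n:ℚ)+1) - (q:ℚ)*(b:ℚ)) else 0)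
      (by
        intro a b
        by_cases h : Nat.gcd a b = 1
        · rw [if_pos h, if_pos (by rwa [Nat.gcd_comm])]
          ring
        · rw [if_neg h, if_neg (by rwa [Nat.gcd_comm])])
  beta_reduce at hsym
  -- Step 8: evaluate the triangular sums via the totient
  have hA : ∀ a ∈ Finset.Icc 1 (n/q),
      (∑ b ∈ Finset.Icc 1 a, if Nat.gcd a b = 1 then (((n:ℚ)+1) - (q:ℚ)*(a:ℚ)) * (((n:ℚ)+1) - (q:ℚ)*(b:ℚ)) else 0)
        = ((((n:ℚ)+1) - (q:ℚ)*(a:ℚ)) * ((a.totient : ℚ) * (((n:ℚ)+1) - (q:ℚ)*(a:ℚ)/2)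
            - (if a = 1 then (q:ℚ)/2 else 0))) := by
    intro a ha
    simp only [Finset.mem_Icc] at ha
    rw [← Finset.sum_filter, ← Finset.mul_sum]
    have := fqInnerSum ((n:ℚ)+1) (q:ℚ) a ha.1
    rw [this]
  have hdiagv : (∑ a ∈ Finset.Icc 1 (n/q),
      (if Nat.gcd a a = 1 then (((n:ℚ)+1) - (q:ℚ)*(a:ℚ)) * (((n:ℚ)+1) - (q:ℚ)*(a:ℚ)) else 0))
      = if 1 ∈ Finset.Icc 1 (n/q) then (((n:ℚ)+1) - (q:ℚ)) * (((n:ℚ)+1) - (q:ℚ)) else 0 := by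
    have e1 : ∀ a ∈ Finset.Icc 1 (n/q),
        (if Nat.gcd a a = 1 then (((n:ℚ)+1) - (q:ℚ)*(a:ℚ)) * (((n:ℚ)+1) - (q:ℚ)*(a:ℚ)) else 0)
          = (if a = 1 then (((n:ℚ)+1) - (q:ℚ)*(a:ℚ)) * (((n:ℚ)+1) - (q:ℚ)*(a:ℚ)) else 0) := by
      intro a _
      simp only [Nat.gcd_self]
    rw [Finset.sum_congr rfl e1,
      Finset.sum_ite_eq' (Finset.Icc 1 (n/q)) 1
        (fun a => (((n:ℚ)+1) - (q:ℚ)*(a:ℚ)) * (((n:ℚ)+1) - (q:ℚ)*(a:ℚ)))]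
    norm_num
  have hsplitA : (∑ a ∈ Finset.Icc 1 (n/q),
      ((((n:ℚ)+1) - (q:ℚ)*(a:ℚ)) * ((a.totient : ℚ) * (((n:ℚ)+1) - (q:ℚ)*(a:ℚ)/2)
          - (if a = 1 then (q:ℚ)/2 else 0))))
      = (∑ a ∈ Finset.Icc 1 (n/q),
          (((n:ℚ)+1) - (q:ℚ)*(a:ℚ)) * (((n:ℚ)+1) - (q:ℚ)/2*(a:ℚ)) * (a.totient : ℚ))
        - (if 1 ∈ Finset.Icc 1 (n/q) then (((n:ℚ)+1) - (q:ℚ)) * ((q:ℚ)/2) else 0) := by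
    have e1 : ∀ a ∈ Finset.Icc 1 (n/q),
        ((((n:ℚ)+1) - (q:ℚ)*(a:ℚ)) * ((a.totient : ℚ) * (((n:ℚ)+1) - (q:ℚ)*(a:ℚ)/2)
            - (if a = 1 then (q:ℚ)/2 else 0)))
          = (((n:ℚ)+1) - (q:ℚ)*(a:ℚ)) * (((n:ℚ)+1) - (q:ℚ)/2*(a:ℚ)) * (a.totient : ℚ)
            - (if a = 1 then ((((n:ℚ)+1) - (q:ℚ)*(a:ℚ)) * ((q:ℚ)/2)) else 0) := by
      intro a _
      split_ifs with h
      · ring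
      · ring
    rw [Finset.sum_congr rfl e1, Finset.sum_sub_distrib,
      Finset.sum_ite_eq' (Finset.Icc 1 (n/q)) 1
        (fun a => (((n:ℚ)+1) - (q:ℚ)*(a:ℚ)) * ((q:ℚ)/2))]
    norm_num
  -- Step 9: put everything together
  rw [h00, hrow0, hcol0, hmain, hsub, hsym, Finset.sum_congr rfl hA, hsplitA, hdiagv]
  by_cases hqn : q ≤ n
  · have hqmem : q ∈ Finset.Icc 1 n := Finset.mem_Icc.mpr ⟨hq, hqn⟩
    have h1mem : (1:ℕ) ∈ Finset.Icc 1 (n/q) :=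
      Finset.mem_Icc.mpr ⟨le_refl 1, (Nat.one_le_div_iff hq0).mpr hqn⟩
    rw [if_pos hqmem, if_pos hqmem, if_pos h1mem, if_pos h1mem]
    ring
  · have hqmem : q ∉ Finset.Icc 1 n := by
      simp only [Finset.mem_Icc]
      omega
    have h1mem : (1:ℕ) ∉ Finset.Icc 1 (n/q) := by
      simp only [Finset.mem_Icc]
      have : n / q = 0 := Nat.div_eq_of_lt (by omega)
      omega
    rw [if_neg hqmem, if_neg hqmem, if_neg h1mem, if_neg h1mem]
    ring
end

section
/- For each fixed q ≥ 1, lim_{n→∞} f_q(n)/n⁴ = 6/(π² q²), where f_q(n) = Σ_{−n<i,j<n, gcd(i,j)=q} (n−|i|)(n−|j|). -/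
open Finset Real Filter

namespace FqAux

open Finset ArithmeticFunction Topology ArithmeticFunction.Moebius ArithmeticFunction.zeta

def Wt (q n : ℕ) (a : ℤ) : ℤ := max ((n : ℤ) - q * |a|) 0

noncomputable def S (q n d : ℕ) : ℤ := ∑ a ∈ Finset.Ioo (-(n:ℤ)) n, if (d:ℤ) ∣ a then Wt q n a else 0

noncomputable def B (m n : ℕ) : ℤ := ∑ c ∈ Finset.Ioo (-(n : ℤ)) n, max ((n : ℤ) - m * |c|) 0

theorem sum_div_moebius (g : ℕ) : ∑ d ∈ g.divisors, μ d = if g = 1 then 1 else 0 := by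
  rcases eq_or_ne g 0 with rfl | hg
  · simp
  have h := congrArg (fun f : ArithmeticFunction ℤ => f g) moebius_mul_coe_zeta
  simp only [mul_apply] at h
  rw [show (∑ x ∈ g.divisorsAntidiagonal, μ x.1 * (ζ : ArithmeticFunction ℤ) x.2)
      = ∑ d ∈ g.divisors, μ d * (ζ : ArithmeticFunction ℤ) (g / d) from
    Nat.sum_divisorsAntidiagonal (fun a b => μ a * (ζ : ArithmeticFunction ℤ) b)] at h
  rw [Finset.sum_congr rfl (fun d hd => ?_)] at h
  · rw [h]; simp [one_apply]
  · have : g / d ≠ 0 :=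
      Nat.div_ne_zero_iff_of_dvd (Nat.mem_divisors.mp hd).1 |>.mpr
        ⟨hg, (Nat.pos_of_mem_divisors hd).ne'⟩
    simp [natCoe_apply, zeta_apply_ne this]

theorem tsum_moebius_sq : ∑' d : ℕ, (μ d : ℝ) / (d : ℝ) ^ 2 = 6 / π ^ 2 := by
  have h2 : (1 : ℝ) < (2 : ℂ).re := by norm_num
  have hz := LSeries_zeta_mul_Lseries_moebius (s := 2) h2
  rw [LSeries_zeta_eq_riemannZeta h2, riemannZeta_two] at hz
  -- hz : (π^2/6) * L ↗μ 2 = 1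
  have hπ : ((π : ℂ) ^ 2) ≠ 0 := by
    simpa using Complex.ofReal_ne_zero.mpr (pow_ne_zero 2 Real.pi_ne_zero)
  have hL : LSeries (fun n => (μ n : ℂ)) 2 = 6 / (π : ℂ) ^ 2 := by
    rw [eq_div_iff hπ]
    field_simp at hz
    linear_combination hz
  have hterm : ∀ d : ℕ, ((((μ d : ℝ) / (d : ℝ) ^ 2) : ℝ) : ℂ) = LSeries.term (fun n => (μ n : ℂ)) 2 d := by
    intro d
    rcases eq_or_ne d 0 with rfl | hd
    · simp
    · rw [LSeries.term_of_ne_zero hd]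
      push_cast
      rw [Complex.cpow_ofNat]  -- maybe wrong name
  have := Complex.ofReal_tsum (L := SummationFilter.unconditional ℕ) (fun d : ℕ => (μ d : ℝ) / (d : ℝ) ^ 2)
  rw [funext hterm] at this
  have key : ((∑' d : ℕ, (μ d : ℝ) / (d : ℝ) ^ 2 : ℝ) : ℂ) = ((6 / π ^ 2 : ℝ) : ℂ) := by
    rw [this, show (∑' d : ℕ, LSeries.term (fun n => (μ n : ℂ)) 2 d) = LSeries (fun n => (μ n : ℂ)) 2 from rfl, hL]
    push_cast
    ring
  exact_mod_cast key

theorem divOut (n k : ℕ) (hk : 1 ≤ k) (F : ℤ → ℤ) (hF : ∀ i : ℤ, (n : ℤ) ≤ |i| → F i = 0) :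
    ∑ i ∈ Finset.Ioo (-(n : ℤ)) n, (if (k : ℤ) ∣ i then F i else 0)
      = ∑ c ∈ Finset.Ioo (-(n : ℤ)) n, F ((k : ℤ) * c) := by
  have hk' : (0 : ℤ) < k := by exact_mod_cast hk
  have habs : ∀ x : ℤ, x ∈ Finset.Ioo (-(n:ℤ)) n ↔ |x| < n := by
    intro x; simp [Finset.mem_Ioo, abs_lt]
  have h1 : ∑ c ∈ (Finset.Ioo (-(n : ℤ)) n).filter (fun c => (k : ℤ) * |c| < n), F ((k : ℤ) * c)
      = ∑ i ∈ (Finset.Ioo (-(n : ℤ)) n).filter (fun i => (k : ℤ) ∣ i), F i := by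
    refine Finset.sum_nbij' (fun c => (k : ℤ) * c) (fun i => i / (k : ℤ)) ?_ ?_ ?_ ?_ ?_
    · intro c hc
      simp only [Finset.mem_filter] at hc ⊢
      obtain ⟨_, hc2⟩ := hc
      have : |(k:ℤ) * c| < n := by rwa [abs_mul, abs_of_pos hk']
      exact ⟨(habs _).mpr this, Dvd.intro c rfl⟩
    · intro i hi
      simp only [Finset.mem_filter] at hi ⊢
      obtain ⟨hi1, hi2⟩ := hi
      have heq : (k : ℤ) * (i / k) = i := Int.mul_ediv_cancel' hi2
      have habs2 : (k:ℤ) * |i / k| = |i| := by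
        have h := congrArg abs heq
        rwa [abs_mul, abs_of_pos hk'] at h
      have hlt : (k:ℤ) * |i / k| < n := habs2 ▸ (habs i).mp hi1
      refine ⟨(habs _).mpr ?_, hlt⟩
      nlinarith [abs_nonneg (i / (k:ℤ))]
    · intro c hc
      exact Int.mul_ediv_cancel_left c hk'.ne'
    · intro i hi
      simp only [Finset.mem_filter] at hi
      exact Int.mul_ediv_cancel' hi.2
    · intro c hc
      rfl
  rw [← Finset.sum_filter, ← h1]
  refine Finset.sum_subset (Finset.filter_subset _ _) (fun c hc hcn => ?_)
  apply hF
  simp only [Finset.mem_filter, hc, true_and, not_lt] at hcn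
  rwa [abs_mul, abs_of_pos hk']

theorem step2 (q n : ℕ) (hq : 1 ≤ q) :
    fq q n = ∑ p ∈ (Finset.Ioo (-(n : ℤ)) n) ×ˢ (Finset.Ioo (-(n : ℤ)) n),
      (if Int.gcd p.1 p.2 = 1 then Wt q n p.1 * Wt q n p.2 else 0) := by
  classical
  have hq' : (0 : ℤ) < q := by exact_mod_cast hq
  have habs : ∀ x : ℤ, x ∈ Finset.Ioo (-(n:ℤ)) n ↔ |x| < n := by
    intro x; simp [Finset.mem_Ioo, abs_lt]
  set I := Finset.Ioo (-(n:ℤ)) n with hI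
  set G : ℤ × ℤ → ℤ := fun p => if Int.gcd p.1 p.2 = q then ((n : ℤ) - |p.1|) * ((n : ℤ) - |p.2|) else 0 with hG
  set H : ℤ × ℤ → ℤ := fun p => if Int.gcd p.1 p.2 = 1 then Wt q n p.1 * Wt q n p.2 else 0 with hH
  have h0 : fq q n = ∑ p ∈ I ×ˢ I, G p := by
    rw [fq, Finset.sum_product]
  rw [h0]
  set s := (I ×ˢ I).filter (fun p => (q:ℤ) ∣ p.1 ∧ (q:ℤ) ∣ p.2) with hs
  set t := (I ×ˢ I).filter (fun p => (q:ℤ) * |p.1| < n ∧ (q:ℤ) * |p.2| < n) with ht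
  have hGs : ∑ p ∈ I ×ˢ I, G p = ∑ p ∈ s, G p := by
    refine (Finset.sum_subset (Finset.filter_subset _ _) (fun p hp hpn => ?_)).symm
    simp only [hs, Finset.mem_filter, hp, true_and] at hpn
    rw [hG]
    simp only
    rw [if_neg]
    intro hgcd
    exact hpn ⟨hgcd ▸ Int.gcd_dvd_left _ _, hgcd ▸ Int.gcd_dvd_right _ _⟩
  have hHt : ∑ p ∈ I ×ˢ I, H p = ∑ p ∈ t, H p := by
    refine (Finset.sum_subset (Finset.filter_subset _ _) (fun p hp hpn => ?_)).symm
    simp only [ht, Finset.mem_filter, hp, true_and, not_and_or, not_lt] at hpn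
    rw [hH]
    simp only
    rcases hpn with h | h
    · have : Wt q n p.1 = 0 := by
        rw [Wt, max_eq_right]; linarith
      rw [this]; simp [mul_comm]
    · have : Wt q n p.2 = 0 := by
        rw [Wt, max_eq_right]; linarith
      rw [this]; simp
  rw [hGs, hHt]
  refine (Finset.sum_nbij' (fun p : ℤ × ℤ => ((q:ℤ) * p.1, (q:ℤ) * p.2)) 
    (fun p : ℤ × ℤ => (p.1 / q, p.2 / q)) ?_ ?_ ?_ ?_ ?_).symm
  · intro p hp
    simp only [ht, hs, Finset.mem_filter, Finset.mem_product] at hp ⊢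
    obtain ⟨⟨h1, h2⟩, h3, h4⟩ := hp
    have e1 : |(q:ℤ) * p.1| < n := by rwa [abs_mul, abs_of_pos hq']
    have e2 : |(q:ℤ) * p.2| < n := by rwa [abs_mul, abs_of_pos hq']
    exact ⟨⟨(habs _).mpr e1, (habs _).mpr e2⟩, Dvd.intro p.1 rfl, Dvd.intro p.2 rfl⟩
  · intro p hp
    simp only [hs, ht, Finset.mem_filter, Finset.mem_product] at hp ⊢
    obtain ⟨⟨h1, h2⟩, h3, h4⟩ := hp
    have heq1 : (q : ℤ) * (p.1 / q) = p.1 := Int.mul_ediv_cancel' h3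
    have heq2 : (q : ℤ) * (p.2 / q) = p.2 := Int.mul_ediv_cancel' h4
    have habs1 : (q:ℤ) * |p.1 / q| = |p.1| := by
      have h := congrArg abs heq1; rwa [abs_mul, abs_of_pos hq'] at h
    have habs2 : (q:ℤ) * |p.2 / q| = |p.2| := by
      have h := congrArg abs heq2; rwa [abs_mul, abs_of_pos hq'] at h
    have m1 : |p.1| < n := (habs _).mp h1
    have m2 : |p.2| < n := (habs _).mp h2
    refine ⟨⟨(habs _).mpr ?_, (habs _).mpr ?_⟩, habs1 ▸ m1, habs2 ▸ m2⟩
    · nlinarith [abs_nonneg (p.1 / (q:ℤ))]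
    · nlinarith [abs_nonneg (p.2 / (q:ℤ))]
  · intro p hp
    obtain ⟨p1, p2⟩ := p
    simp only [Prod.mk.injEq]
    exact ⟨Int.mul_ediv_cancel_left _ hq'.ne', Int.mul_ediv_cancel_left _ hq'.ne'⟩
  · intro p hp
    simp only [hs, Finset.mem_filter] at hp
    obtain ⟨p1, p2⟩ := p
    simp only [Prod.mk.injEq]
    exact ⟨Int.mul_ediv_cancel' hp.2.1, Int.mul_ediv_cancel' hp.2.2⟩
  · intro p hp
    simp only [ht, Finset.mem_filter] at hp
    obtain ⟨_, e1, e2⟩ := hp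
    rw [hH, hG]
    simp only
    have hgcd : Int.gcd ((q:ℤ) * p.1) ((q:ℤ) * p.2) = q * Int.gcd p.1 p.2 := by
      rw [Int.gcd_mul_left]
      simp
    have hiff : (Int.gcd ((q:ℤ) * p.1) ((q:ℤ) * p.2) = q) ↔ Int.gcd p.1 p.2 = 1 := by
      rw [hgcd]
      constructor
      · intro h
        have := Nat.eq_of_mul_eq_mul_left (show 0 < q by omega) (show q * Int.gcd p.1 p.2 = q * 1 by omega)
        omega
      · intro h; rw [h, mul_one]
    rw [if_congr hiff rfl rfl]
    have w1 : Wt q n p.1 = (n : ℤ) - |(q:ℤ) * p.1| := by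
      rw [Wt, abs_mul, abs_of_pos hq', max_eq_left (by linarith)]
    have w2 : Wt q n p.2 = (n : ℤ) - |(q:ℤ) * p.2| := by
      rw [Wt, abs_mul, abs_of_pos hq', max_eq_left (by linarith)]
    rw [w1, w2]

theorem moebius_point (n : ℕ) (a b : ℤ) (ha : |a| < n) (hb : |b| < n) (hab : ¬(a = 0 ∧ b = 0)) :
    ∑ d ∈ Finset.Icc 1 n, (if (d:ℤ) ∣ a ∧ (d:ℤ) ∣ b then (μ d : ℤ) else 0)
      = if Int.gcd a b = 1 then 1 else 0 := by
  classical
  have hg0 : Int.gcd a b ≠ 0 := by rw [Ne, Int.gcd_eq_zero_iff]; tauto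
  have hgn : Int.gcd a b ≤ n := by
    rcases not_and_or.mp hab with h | h
    · have h2 : (Int.gcd a b : ℤ) ≤ |a| :=
        Int.le_of_dvd (abs_pos.mpr h) ((dvd_abs _ _).mpr (Int.gcd_dvd_left _ _))
      have := lt_of_le_of_lt h2 ha
      exact_mod_cast this.le
    · have h2 : (Int.gcd a b : ℤ) ≤ |b| :=
        Int.le_of_dvd (abs_pos.mpr h) ((dvd_abs _ _).mpr (Int.gcd_dvd_right _ _))
      have := lt_of_le_of_lt h2 hb
      exact_mod_cast this.le
  have hfil : (Finset.Icc 1 n).filter (fun d : ℕ => (d:ℤ) ∣ a ∧ (d:ℤ) ∣ b) = (Int.gcd a b).divisors := by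
    ext d
    simp only [Finset.mem_filter, Finset.mem_Icc, Nat.mem_divisors]
    constructor
    · rintro ⟨⟨_, _⟩, hda, hdb⟩
      exact ⟨Int.dvd_gcd hda hdb, hg0⟩
    · rintro ⟨hdg, -⟩
      have hgpos : 0 < Int.gcd a b := Nat.pos_of_ne_zero hg0
      have hd1 : 1 ≤ d := Nat.pos_of_dvd_of_pos hdg hgpos
      have hdn : d ≤ n := le_trans (Nat.le_of_dvd hgpos hdg) hgn
      have hdi : (d:ℤ) ∣ (Int.gcd a b : ℤ) := Int.natCast_dvd_natCast.mpr hdg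
      exact ⟨⟨hd1, hdn⟩, hdi.trans (Int.gcd_dvd_left _ _), hdi.trans (Int.gcd_dvd_right _ _)⟩
  rw [← Finset.sum_filter, hfil, sum_div_moebius]

theorem step3 (q n : ℕ) (hq : 1 ≤ q) :
    fq q n = ∑ d ∈ Finset.Icc 1 n, (μ d : ℤ) * ((S q n d)^2 - (n:ℤ)^2) := by
  classical
  set I := Finset.Ioo (-(n:ℤ)) n with hI
  have habs : ∀ x : ℤ, x ∈ I ↔ |x| < n := by
    intro x; simp [hI, Finset.mem_Ioo, abs_lt]
  set M : ℤ := ∑ d ∈ Finset.Icc 1 n, (μ d : ℤ) with hM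
  have key : ∀ p ∈ I ×ˢ I,
      (∑ d ∈ Finset.Icc 1 n, (if (d:ℤ) ∣ p.1 ∧ (d:ℤ) ∣ p.2 then (μ d : ℤ) else 0))
          * (Wt q n p.1 * Wt q n p.2)
      = (if Int.gcd p.1 p.2 = 1 then Wt q n p.1 * Wt q n p.2 else 0)
        + (if p = ((0:ℤ),(0:ℤ)) then M * (n:ℤ)^2 else 0) := by
    intro p hp
    rcases eq_or_ne p ((0:ℤ),(0:ℤ)) with rfl | hne
    · rw [if_pos rfl]
      rw [show (((0:ℤ),(0:ℤ)).1.gcd ((0:ℤ),(0:ℤ)).2) = 0 by simp]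
      rw [if_neg (by norm_num)]
      have hw : Wt q n ((0:ℤ),(0:ℤ)).1 = (n:ℤ) := by
        simp [Wt]
      rw [hw]
      rw [Finset.sum_congr rfl (fun d _ => by simp : ∀ d ∈ Finset.Icc 1 n,
        (if (d:ℤ) ∣ ((0:ℤ),(0:ℤ)).1 ∧ (d:ℤ) ∣ ((0:ℤ),(0:ℤ)).2 then (μ d : ℤ) else 0) = μ d)]
      rw [← hM]
      ring
    · rw [if_neg hne, add_zero]
      have hmem := Finset.mem_product.mp hp
      have h1 := (habs _).mp hmem.1
      have h2 := (habs _).mp hmem.2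
      rw [moebius_point n p.1 p.2 h1 h2 (fun h => hne (Prod.ext_iff.mpr ⟨h.1, h.2⟩))]
      split_ifs <;> ring
  have hsum := Finset.sum_congr rfl key
  rw [Finset.sum_add_distrib] at hsum
  have h00 : ∑ p ∈ I ×ˢ I, (if p = ((0:ℤ),(0:ℤ)) then M * (n:ℤ)^2 else 0) = M * (n:ℤ)^2 := by
    rw [Finset.sum_ite_eq' (I ×ˢ I) ((0:ℤ),(0:ℤ)) (fun _ => M * (n:ℤ)^2)]
    rcases Nat.eq_zero_or_pos n with rfl | hn
    · simp [hI]
    · rw [if_pos]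
      have h0I : (0:ℤ) ∈ I := (habs 0).mpr (by simpa using (by exact_mod_cast hn : (0:ℤ) < n))
      exact Finset.mem_product.mpr ⟨h0I, h0I⟩
  have hswap : ∑ p ∈ I ×ˢ I,
      (∑ d ∈ Finset.Icc 1 n, (if (d:ℤ) ∣ p.1 ∧ (d:ℤ) ∣ p.2 then (μ d : ℤ) else 0))
        * (Wt q n p.1 * Wt q n p.2)
      = ∑ d ∈ Finset.Icc 1 n, (μ d : ℤ) * (S q n d)^2 := by
    have e1 : ∀ p : ℤ × ℤ,
        (∑ d ∈ Finset.Icc 1 n, (if (d:ℤ) ∣ p.1 ∧ (d:ℤ) ∣ p.2 then (μ d : ℤ) else 0))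
          * (Wt q n p.1 * Wt q n p.2)
        = ∑ d ∈ Finset.Icc 1 n, (μ d : ℤ) *
            ((if (d:ℤ) ∣ p.1 then Wt q n p.1 else 0) * (if (d:ℤ) ∣ p.2 then Wt q n p.2 else 0)) := by
      intro p
      rw [Finset.sum_mul]
      refine Finset.sum_congr rfl (fun d _ => ?_)
      split_ifs <;> first | tauto | ring
    rw [Finset.sum_congr rfl (fun p _ => e1 p), Finset.sum_comm]
    refine Finset.sum_congr rfl (fun d _ => ?_)
    rw [← Finset.mul_sum]
    congr 1
    rw [Finset.sum_product (f := fun p : ℤ × ℤ =>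
      (if (d:ℤ) ∣ p.1 then Wt q n p.1 else 0) * (if (d:ℤ) ∣ p.2 then Wt q n p.2 else 0))]
    simp only [S, sq]
    rw [Finset.sum_mul_sum]
  rw [hswap, h00] at hsum
  have hM2 : M * (n:ℤ)^2 = ∑ d ∈ Finset.Icc 1 n, (μ d : ℤ) * (n:ℤ)^2 := by
    rw [hM, Finset.sum_mul]
  rw [step2 q n hq, ← hI]
  calc (∑ p ∈ I ×ˢ I, if Int.gcd p.1 p.2 = 1 then Wt q n p.1 * Wt q n p.2 else 0)
      = (∑ d ∈ Finset.Icc 1 n, (μ d : ℤ) * (S q n d)^2) - M * (n:ℤ)^2 := by linarith [hsum]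
    _ = ∑ d ∈ Finset.Icc 1 n, ((μ d : ℤ) * (S q n d)^2 - (μ d : ℤ) * (n:ℤ)^2) := by
        rw [hM2, ← Finset.sum_sub_distrib]
    _ = ∑ d ∈ Finset.Icc 1 n, (μ d : ℤ) * ((S q n d)^2 - (n:ℤ)^2) :=
        Finset.sum_congr rfl (fun d _ => by ring)

theorem step4' (q n d : ℕ) (hq : 1 ≤ q) (hd : 1 ≤ d) : S q n d = B (q * d) n := by
  have hF : ∀ i : ℤ, (n : ℤ) ≤ |i| → Wt q n i = 0 := by
    intro i hi
    have hq' : (1 : ℤ) ≤ q := by exact_mod_cast hq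
    rw [Wt, max_eq_right]
    nlinarith [abs_nonneg i]
  rw [S, divOut n d hd (Wt q n) hF, B]
  refine Finset.sum_congr rfl (fun c _ => ?_)
  have hd' : (0:ℤ) ≤ d := by positivity
  rw [Wt, abs_mul, abs_of_nonneg hd']
  push_cast
  ring_nf

theorem B_closed (m n : ℕ) (hm : 1 ≤ m) (hn : 1 ≤ n) :
    B m n = (n:ℤ) + 2*((n-1)/m : ℕ)*(n:ℤ) - (m:ℤ)*((n-1)/m : ℕ)*(((n-1)/m : ℕ)+1) := by
  set K : ℕ := (n-1)/m with hK
  set g : ℤ → ℤ := fun c => max ((n:ℤ) - m * |c|) 0 with hg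
  have hn' : (1:ℤ) ≤ n := by exact_mod_cast hn
  have hunion : Finset.Ioo (-(n:ℤ)) 0 ∪ Finset.Ico (0:ℤ) n = Finset.Ioo (-(n:ℤ)) n := by
    ext x; simp only [Finset.mem_union, Finset.mem_Ioo, Finset.mem_Ico]; omega
  have hdisj : Disjoint (Finset.Ioo (-(n:ℤ)) 0) (Finset.Ico (0:ℤ) n) := by
    refine Finset.disjoint_left.mpr (fun a ha hb => ?_)
    simp only [Finset.mem_Ioo, Finset.mem_Ico] at ha hb
    omega
  have hsplit : B m n = (∑ c ∈ Finset.Ioo (-(n:ℤ)) 0, g c) + ∑ c ∈ Finset.Ico (0:ℤ) n, g c := by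
    rw [B, ← hunion, Finset.sum_union hdisj]
  have hneg : ∑ c ∈ Finset.Ioo (-(n:ℤ)) 0, g c = ∑ c ∈ Finset.Ioo (0:ℤ) n, g c := by
    refine Finset.sum_nbij' (fun c => -c) (fun c => -c) ?_ ?_ ?_ ?_ ?_
    · intro c hc; simp only [Finset.mem_Ioo] at hc ⊢; omega
    · intro c hc; simp only [Finset.mem_Ioo] at hc ⊢; omega
    · intro c _; ring
    · intro c _; ring
    · intro c _; simp only [hg, abs_neg]
  have hIco : ∑ c ∈ Finset.Ico (0:ℤ) n, g c = g 0 + ∑ c ∈ Finset.Ioo (0:ℤ) n, g c := by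
    have h : Finset.Ico (0:ℤ) n = insert 0 (Finset.Ioo (0:ℤ) n) := by
      ext x; simp only [Finset.mem_Ico, Finset.mem_Ioo, Finset.mem_insert]; omega
    rw [h, Finset.sum_insert (by simp)]
  have hg0 : g 0 = (n:ℤ) := by simp [hg]
  have hpos : ∑ c ∈ Finset.Ioo (0:ℤ) n, g c
      = ∑ i ∈ Finset.range (n-1), max ((n:ℤ) - m * ((i:ℤ)+1)) 0 := by
    refine Finset.sum_nbij' (fun c : ℤ => (c - 1).toNat) (fun i : ℕ => (i:ℤ)+1) ?_ ?_ ?_ ?_ ?_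
    · intro c hc; simp only [Finset.mem_Ioo, Finset.mem_range] at hc ⊢; omega
    · intro i hi; simp only [Finset.mem_Ioo, Finset.mem_range] at hi ⊢; omega
    · intro c hc; simp only [Finset.mem_Ioo] at hc; omega
    · intro i hi; simp only [Finset.mem_range] at hi; omega
    · intro c hc
      simp only [Finset.mem_Ioo] at hc
      have h1 : ((c - 1).toNat : ℤ) = c - 1 := Int.toNat_of_nonneg (by omega)
      rw [hg]
      simp only [h1]
      rw [abs_of_pos hc.1]
      ring_nf
  have htrunc : ∑ i ∈ Finset.range (n-1), max ((n:ℤ) - m * ((i:ℤ)+1)) 0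
      = ∑ i ∈ Finset.range K, ((n:ℤ) - m * ((i:ℤ)+1)) := by
    have hsub : Finset.range K ⊆ Finset.range (n-1) := by
      apply Finset.range_subset_range.mpr
      exact le_trans (Nat.div_le_self _ _) (le_refl _)
    rw [← Finset.sum_subset hsub (fun i hi hni => ?_)]
    · refine Finset.sum_congr rfl (fun i hi => ?_)
      simp only [Finset.mem_range] at hi
      have h1 : (i+1) * m ≤ K * m := Nat.mul_le_mul_right m (by omega)
      have h2 : K * m ≤ n - 1 := Nat.div_mul_le_self _ _
      have h3 : (i+1) * m ≤ n - 1 := le_trans h1 h2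
      have h3' : (i+1) * m + 1 ≤ n := by omega
      have h4 : ((i:ℤ)+1) * (m:ℤ) + 1 ≤ (n:ℤ) := by exact_mod_cast h3'
      rw [max_eq_left (by nlinarith)]
    · simp only [Finset.mem_range] at hi hni
      have hKi : K ≤ i := by omega
      have h1 : n - 1 < (K + 1) * m := (Nat.div_lt_iff_lt_mul (by omega)).mp (by omega)
      have h2 : (K+1) * m ≤ (i+1) * m := Nat.mul_le_mul_right m (by omega)
      have h3 : n ≤ (i+1) * m := by omega
      rw [max_eq_right]
      have h4 : (n:ℤ) ≤ ((i:ℤ)+1) * m := by exact_mod_cast h3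
      nlinarith
  have hT : (2:ℤ) * (∑ i ∈ Finset.range K, ((i:ℤ)+1)) = (K:ℤ) * ((K:ℤ)+1) := by
    have hN : (∑ i ∈ Finset.range K, (i+1)) * 2 = K * (K+1) := by
      rw [Finset.sum_add_distrib, Finset.sum_const, Finset.card_range, add_mul,
        Finset.sum_range_id_mul_two]
      cases K with
      | zero => simp
      | succ k => simp [Nat.succ_sub_one]; ring
    have := congrArg (fun x : ℕ => (x : ℤ)) hN
    push_cast at this
    linarith
  have hsum : ∑ i ∈ Finset.range K, ((n:ℤ) - m * ((i:ℤ)+1))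
      = (K:ℤ) * n - (m:ℤ) * (∑ i ∈ Finset.range K, ((i:ℤ)+1)) := by
    rw [Finset.sum_sub_distrib, Finset.sum_const, Finset.card_range, ← Finset.mul_sum]
    ring
  rw [hsplit, hneg, hIco, hg0, hpos, htrunc, hsum]
  linear_combination (-(m:ℤ)) * hT

theorem B_ge (m n : ℕ) (hn : 1 ≤ n) : (n:ℤ) ≤ B m n := by
  rw [B]
  have h0 : (0:ℤ) ∈ Finset.Ioo (-(n:ℤ)) n := by
    simp only [Finset.mem_Ioo]
    constructor <;> [skip; skip] <;> omega
  have := Finset.single_le_sum (f := fun c : ℤ => max ((n : ℤ) - m * |c|) 0)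
    (fun i _ => le_max_right _ _) h0
  simpa using this

theorem B_eq_small (m n : ℕ) (hm : 1 ≤ m) (hn : 1 ≤ n) (h : n < m) : B m n = n := by
  rw [B_closed m n hm hn, Nat.div_eq_of_lt (by omega)]
  push_cast; ring

theorem Kdiv_tendsto (m : ℕ) (hm : 1 ≤ m) :
    Tendsto (fun n : ℕ => (((n-1)/m : ℕ) : ℝ) / (n:ℝ)) atTop (𝓝 (1/(m:ℝ))) := by
  have hm' : (0:ℝ) < m := by exact_mod_cast hm
  refine tendsto_of_tendsto_of_tendsto_of_le_of_le'
    (g := fun n : ℕ => 1/(m:ℝ) - 1/(n:ℝ)) (h := fun _ : ℕ => 1/(m:ℝ)) ?_ ?_ ?_ ?_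
  · simpa using (tendsto_const_nhds (x := 1/(m:ℝ)) (f := atTop)).sub
      tendsto_one_div_atTop_nhds_zero_nat
  · exact tendsto_const_nhds
  · filter_upwards [eventually_ge_atTop 1] with n hn
    set K : ℕ := (n-1)/m with hK
    have hn' : (0:ℝ) < n := by exact_mod_cast hn
    have h1 : n - 1 < (K+1)*m := (Nat.div_lt_iff_lt_mul (by omega)).mp (by omega)
    have h1' : n - 1 < K*m + m := by rw [add_mul, one_mul] at h1; exact h1
    have h2 : n ≤ K*m + m := by omega
    have hcast : (n:ℝ) ≤ (K:ℝ)*m + m := by exact_mod_cast h2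
    rw [sub_le_iff_le_add, ← add_div, div_le_div_iff₀ hm' hn']
    nlinarith
  · filter_upwards [eventually_ge_atTop 1] with n hn
    set K : ℕ := (n-1)/m with hK
    have hn' : (0:ℝ) < n := by exact_mod_cast hn
    have h2 : K*m ≤ n := le_trans (Nat.div_mul_le_self _ _) (by omega)
    have hcast : (K:ℝ)*m ≤ n := by exact_mod_cast h2
    rw [div_le_div_iff₀ hn' hm']
    nlinarith

theorem B_div_tendsto (m : ℕ) (hm : 1 ≤ m) :
    Tendsto (fun n : ℕ => ((B m n : ℤ) : ℝ) / (n:ℝ)^2) atTop (𝓝 (1/(m:ℝ))) := by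
  have hm' : (0:ℝ) < m := by exact_mod_cast hm
  have hK := Kdiv_tendsto m hm
  have hu : Tendsto (fun n : ℕ => 1/(n:ℝ)) atTop (𝓝 0) := tendsto_one_div_atTop_nhds_zero_nat
  set k : ℕ → ℝ := fun n => (((n-1)/m : ℕ) : ℝ) / (n:ℝ) with hk
  have hmain : Tendsto (fun n : ℕ => 1/(n:ℝ) + 2*(k n) - (m:ℝ)*(k n)*(k n + 1/(n:ℝ)))
      atTop (𝓝 (0 + 2*(1/(m:ℝ)) - (m:ℝ)*(1/(m:ℝ))*((1/(m:ℝ)) + 0))) := by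
    exact (hu.add (hK.const_mul 2)).sub
      (((tendsto_const_nhds (x := (m:ℝ))).mul hK).mul (hK.add hu))
  have hval : (0 + 2*(1/(m:ℝ)) - (m:ℝ)*(1/(m:ℝ))*((1/(m:ℝ)) + 0)) = 1/(m:ℝ) := by
    field_simp
    norm_num
  rw [hval] at hmain
  refine hmain.congr' ?_
  filter_upwards [eventually_ge_atTop 1] with n hn
  have hn' : (0:ℝ) < n := by exact_mod_cast hn
  have hB := B_closed m n hm hn
  have hBr : ((B m n : ℤ) : ℝ)
      = (n:ℝ) + 2*(((n-1)/m : ℕ):ℝ)*(n:ℝ) - (m:ℝ)*(((n-1)/m : ℕ):ℝ)*((((n-1)/m : ℕ):ℝ)+1) := by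
    exact_mod_cast congrArg (fun z : ℤ => (z : ℝ)) hB
  rw [hk]
  dsimp only
  rw [hBr]
  field_simp

theorem Bsq_bound (m n : ℕ) (hm : 1 ≤ m) (hn : 1 ≤ n) :
    |((B m n : ℤ) : ℝ)^2 - (n:ℝ)^2| ≤ 8*(n:ℝ)^4 / (m:ℝ)^2 := by
  have hm' : (0:ℝ) < m := by exact_mod_cast hm
  have hn' : (0:ℝ) < n := by exact_mod_cast hn
  rcases lt_or_ge n m with hsm | hbig
  · rw [B_eq_small m n hm hn hsm]
    push_cast
    rw [sub_self, abs_zero]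
    positivity
  · -- m ≤ n
    have hmn : (m:ℝ) ≤ n := by exact_mod_cast hbig
    set K : ℕ := (n-1)/m with hK
    have hBr : ((B m n : ℤ) : ℝ)
        = (n:ℝ) + 2*(K:ℝ)*(n:ℝ) - (m:ℝ)*(K:ℝ)*((K:ℝ)+1) := by
      exact_mod_cast congrArg (fun z : ℤ => (z : ℝ)) (B_closed m n hm hn)
    have hKm : (K:ℝ)*m ≤ n := by
      have h2 : K*m ≤ n := le_trans (Nat.div_mul_le_self _ _) (by omega)
      exact_mod_cast h2
    have hK0 : (0:ℝ) ≤ K := by positivity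
    have hlow : (n:ℝ) ≤ ((B m n : ℤ) : ℝ) := by exact_mod_cast B_ge m n hn
    have hup : (m:ℝ) * (((B m n : ℤ) : ℝ) - n) ≤ 2*(n:ℝ)^2 := by
      rw [hBr]
      nlinarith [mul_le_mul_of_nonneg_right hKm hn'.le,
        mul_nonneg (mul_nonneg (mul_nonneg hm'.le hm'.le) hK0)
          (show (0:ℝ) ≤ (K:ℝ)+1 by positivity)]
    have hup2 : (m:ℝ) * (((B m n : ℤ) : ℝ) + n) ≤ 4*(n:ℝ)^2 := by
      nlinarith
    have hnonneg : (0:ℝ) ≤ ((B m n : ℤ) : ℝ)^2 - (n:ℝ)^2 := by nlinarith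
    rw [abs_of_nonneg hnonneg, le_div_iff₀ (by positivity : (0:ℝ) < (m:ℝ)^2)]
    nlinarith [mul_le_mul hup hup2 (by nlinarith) (by positivity : (0:ℝ) ≤ 2*(n:ℝ)^2)]

theorem abs_moebius_le (d : ℕ) : |(μ d : ℝ)| ≤ 1 := by
  have h : |μ d| ≤ (1:ℤ) := by
    rcases eq_or_ne (μ d) 0 with h | h
    · simp [h]
    · rw [moebius_apply_of_squarefree (moebius_ne_zero_iff_squarefree.mp h)]
      simp [abs_pow]
  calc |(μ d : ℝ)| = ((|μ d| : ℤ) : ℝ) := by push_cast; rfl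
    _ ≤ 1 := by exact_mod_cast h


theorem main (q : ℕ) (hq : 1 ≤ q) :
    Filter.Tendsto (fun n : ℕ => (fq q n : ℝ) / (n : ℝ) ^ 4) Filter.atTop
      (nhds (6 / (π ^ 2 * (q : ℝ) ^ 2))) := by

  have hq' : (0:ℝ) < q := by exact_mod_cast hq
  set F : ℕ → ℕ → ℝ := fun n d =>
    (μ d : ℝ) * (((B (q*d) n : ℤ) : ℝ)^2 - (n:ℝ)^2) / (n:ℝ)^4 with hF
  set g : ℕ → ℝ := fun d => (μ d : ℝ) / ((q:ℝ)*(d:ℝ))^2 with hg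
  set bound : ℕ → ℝ := fun d => 8 / ((q:ℝ)*(d:ℝ))^2 with hbnd
  -- summability of the bound
  have hsummable : Summable bound := by
    have heq : bound = fun d : ℕ => (8/(q:ℝ)^2) * (1/(d:ℝ)^2) := by
      funext d
      rcases eq_or_ne d 0 with rfl | hd
      · simp [hbnd]
      · have hd' : (0:ℝ) < d := by exact_mod_cast Nat.pos_of_ne_zero hd
        rw [hbnd]
        field_simp
    rw [heq]
    exact (Real.summable_one_div_nat_pow.mpr one_lt_two).mul_left _
  -- pointwise limits
  have htend : ∀ d : ℕ, Tendsto (fun n => F n d) atTop (𝓝 (g d)) := by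
    intro d
    rcases eq_or_ne d 0 with rfl | hd
    · have h1 : (fun n => F n 0) = fun _ : ℕ => (0:ℝ) := by
        funext n; rw [hF]; simp
      have h2 : g 0 = 0 := by rw [hg]; simp
      rw [h1, h2]
      exact tendsto_const_nhds
    · have hd1 : 1 ≤ d := Nat.pos_of_ne_zero hd
      have hm : 1 ≤ q * d := Nat.one_le_iff_ne_zero.mpr (by positivity)
      have hm' : (0:ℝ) < ((q*d : ℕ):ℝ) := by exact_mod_cast hm
      have hB := B_div_tendsto (q*d) hm
      have hu : Tendsto (fun n : ℕ => 1/(n:ℝ)) atTop (𝓝 0) := tendsto_one_div_atTop_nhds_zero_nat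
      have hmain : Tendsto (fun n : ℕ =>
          (μ d : ℝ) * ((((B (q*d) n : ℤ) : ℝ)/(n:ℝ)^2)^2 - (1/(n:ℝ))^2)) atTop
          (𝓝 ((μ d : ℝ) * ((1/((q*d : ℕ):ℝ))^2 - 0^2))) :=
        tendsto_const_nhds.mul ((hB.pow 2).sub (hu.pow 2))
      have hval : (μ d : ℝ) * ((1/((q*d : ℕ):ℝ))^2 - 0^2) = g d := by
        rw [hg]
        push_cast
        rw [mul_pow]
        field_simp
        ring
      rw [hval] at hmain
      refine hmain.congr' ?_
      filter_upwards [eventually_ge_atTop 1] with n hn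
      have hn' : (0:ℝ) < n := by exact_mod_cast hn
      rw [hF]
      field_simp
  -- uniform bound
  have hboundall : ∀ᶠ n in atTop, ∀ d : ℕ, ‖F n d‖ ≤ bound d := by
    filter_upwards [eventually_ge_atTop 1] with n hn
    intro d
    have hn' : (0:ℝ) < n := by exact_mod_cast hn
    rcases eq_or_ne d 0 with rfl | hd
    · simp [hF, hbnd]
    · have hd1 : 1 ≤ d := Nat.pos_of_ne_zero hd
      have hm : 1 ≤ q * d := Nat.one_le_iff_ne_zero.mpr (by positivity)
      have hm' : (0:ℝ) < ((q*d : ℕ):ℝ) := by exact_mod_cast hm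
      have hd' : (0:ℝ) < d := by exact_mod_cast hd1
      have hXb := Bsq_bound (q*d) n hm hn
      have h1 : ‖F n d‖ = |(μ d : ℝ)| * |(((B (q*d) n : ℤ) : ℝ)^2 - (n:ℝ)^2)| / (n:ℝ)^4 := by
        rw [hF, Real.norm_eq_abs, abs_div, abs_mul, abs_of_pos (by positivity : (0:ℝ) < (n:ℝ)^4)]
      rw [h1]
      calc |(μ d : ℝ)| * |(((B (q*d) n : ℤ) : ℝ)^2 - (n:ℝ)^2)| / (n:ℝ)^4
          ≤ 1 * (8*(n:ℝ)^4 / ((q*d : ℕ):ℝ)^2) / (n:ℝ)^4 := by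
            gcongr <;> first | exact abs_moebius_le d | exact hXb
        _ = bound d := by
            rw [hbnd]
            push_cast
            field_simp
  -- the eventual identity
  have heq : ∀ᶠ n in atTop, (∑' d : ℕ, F n d) = (fq q n : ℝ) / (n:ℝ)^4 := by
    filter_upwards [eventually_ge_atTop 1] with n hn
    have hn' : (0:ℝ) < n := by exact_mod_cast hn
    have hvanish : ∀ d : ℕ, d ∉ Finset.Icc 1 n → F n d = 0 := by
      intro d hd
      rw [Finset.mem_Icc] at hd
      rcases eq_or_ne d 0 with rfl | hd0
      · rw [hF]; simp
      · have hd1 : 1 ≤ d := Nat.pos_of_ne_zero hd0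
        have hdn : n < d := by omega
        have hm : 1 ≤ q * d := Nat.one_le_iff_ne_zero.mpr (by positivity)
        have hnm : n < q * d := lt_of_lt_of_le hdn (Nat.le_mul_of_pos_left d hq)
        have hBe : B (q*d) n = n := B_eq_small (q*d) n hm hn hnm
        rw [hF]
        simp only [hBe]
        push_cast
        simp
    rw [tsum_eq_sum hvanish]
    have hcast : ((fq q n : ℤ):ℝ) = ∑ d ∈ Finset.Icc 1 n,
        (μ d:ℝ) * (((S q n d : ℤ):ℝ)^2 - (n:ℝ)^2) := by
      rw [step3 q n hq]
      push_cast
      rfl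
    rw [hcast, Finset.sum_div]
    refine Finset.sum_congr rfl (fun d hd => ?_)
    have hd1 : 1 ≤ d := (Finset.mem_Icc.mp hd).1
    rw [hF, step4' q n d hq hd1]
  -- put everything together
  have key := tendsto_tsum_of_dominated_convergence hsummable htend hboundall
  have hlim : Tendsto (fun n : ℕ => (fq q n : ℝ) / (n:ℝ)^4) atTop (𝓝 (∑' d : ℕ, g d)) :=
    key.congr' heq
  have hgval : (∑' d : ℕ, g d) = 6 / (π^2 * (q:ℝ)^2) := by
    have hgeq : g = fun d : ℕ => (1/(q:ℝ)^2) * ((μ d:ℝ)/(d:ℝ)^2) := by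
      funext d
      rcases eq_or_ne d 0 with rfl | hd
      · simp [hg]
      · have hd' : (0:ℝ) < d := by exact_mod_cast Nat.pos_of_ne_zero hd
        rw [hg]
        field_simp
    rw [hgeq, tsum_mul_left, tsum_moebius_sq]
    have hπ : (0:ℝ) < π := Real.pi_pos
    field_simp
  rw [hgval] at hlim
  exact hlim


end FqAux

/-- `lim_{n→∞} f_q(n)/n⁴ = 6/(π²q²)` for fixed `q ≥ 1`. -/
theorem fq_limit (q : ℕ) (hq : 1 ≤ q) :
    Filter.Tendsto (fun n : ℕ => (fq q n : ℝ) / (n : ℝ) ^ 4) Filter.atTop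
      (nhds (6 / (π ^ 2 * (q : ℝ) ^ 2))) := FqAux.main q hq
end
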